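/- arXiv:2104.02707 — 4 statements merged into one kernel-verified Lean document; each statement's English description precedes it below -/
import Mathlib

section
/- For every $f \in L^2[0,1]$, $\|W_N T_N W_N^*(f) - V(f)\|_{L^2} \to 0$ as $N \to \infty$; that is, $W_N T_N W_N^* \to V$ in the strong operator topology. -/
open MeasureTheory ProbabilityTheory Filter
open scoped ENNReal NNReal

noncomputable section

/-- Lebesgue measure restricted to the unit interval `[0,1]`. -/
def μ01 : Measure ℝ := volume.restrict (Set.Icc (0:ℝ) 1)

instance : IsFiniteMeasure μ01 :=
  ⟨by
    simp only [μ01, Measure.restrict_apply_univ]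
    simp [Real.volume_Icc]⟩

/-- The function `e_i^N = √N · 𝟙_{[i/N,(i+1)/N]}` as an element of `L²[0,1]`
(here `i : Fin N` runs over `0, …, N-1`, corresponding to `1, …, N` in the paper). -/
def eN (N : ℕ) (i : Fin N) : Lp ℂ 2 μ01 :=
  indicatorConstLp 2 (measurableSet_Icc :
      MeasurableSet (Set.Icc ((i : ℝ) / N) (((i : ℝ) + 1) / N)))
    (measure_ne_top μ01 _) ((Real.sqrt N : ℝ) : ℂ)

/-- The isometry `W_N : ℂ^N → L²[0,1]`, `(a_1,…,a_N) ↦ ∑ a_i e_i^N`. -/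
def Wmap (N : ℕ) (a : EuclideanSpace ℂ (Fin N)) : Lp ℂ 2 μ01 :=
  ∑ i : Fin N, a i • eN N i

/-- The adjoint `W_N^* : L²[0,1] → ℂ^N`, `f ↦ (⟨f,e_1^N⟩, …, ⟨f,e_N^N⟩)`
(recall that Mathlib's inner product is conjugate-linear in the *first* slot,
so the paper's `⟨f, e⟩` is `inner e f`). -/
def Wstar (N : ℕ) (f : Lp ℂ 2 μ01) : EuclideanSpace ℂ (Fin N) :=
  (WithLp.equiv 2 (Fin N → ℂ)).symm fun i => @inner ℂ _ _ (eN N i) f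

/-- The deterministic lower-triangular matrix `T_N` whose entries on and below
the diagonal all equal `1/N`. -/
def TM (N : ℕ) : Matrix (Fin N) (Fin N) ℂ :=
  Matrix.of fun i j => if j ≤ i then ((N : ℂ))⁻¹ else 0

/-- Real-valued version of `T_N`. -/
def TMr (N : ℕ) : Matrix (Fin N) (Fin N) ℝ :=
  Matrix.of fun i j => if j ≤ i then ((N : ℝ))⁻¹ else 0

/-- The random matrix `X_N(ω) = (1/N)(X_{i,j}(ω))_{i,j}` (complex-valued version;
the hypothesis that the entries above the diagonal vanish is imposed separately). -/
def XM {Ω : Type*} (N : ℕ) (X : Fin N → Fin N → Ω → ℝ) (ω : Ω) :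
    Matrix (Fin N) (Fin N) ℂ :=
  Matrix.of fun i j => ((N : ℂ))⁻¹ * (X i j ω : ℂ)

/-- The random matrix `X_N(ω) = (1/N)(X_{i,j}(ω))_{i,j}` (real-valued version). -/
def XMr {Ω : Type*} (N : ℕ) (X : Fin N → Fin N → Ω → ℝ) (ω : Ω) :
    Matrix (Fin N) (Fin N) ℝ :=
  Matrix.of fun i j => ((N : ℝ))⁻¹ * X i j ω

/-- A matrix acting as an operator on `ℂ^N` (with its euclidean structure). -/
def matVec {N : ℕ} (M : Matrix (Fin N) (Fin N) ℂ) (u : EuclideanSpace ℂ (Fin N)) :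
    EuclideanSpace ℂ (Fin N) :=
  Matrix.toEuclideanLin M u

/-- The index set of the (closed) lower triangle of an `N × N` matrix. -/
def LTri (N : ℕ) : Type := {p : Fin N × Fin N // p.2 ≤ p.1}

/-- `V : L²[0,1] → L²[0,1]` is the Volterra operator: `V(f)(x) = ∫_0^x f(t) dt`. -/
def IsVolterra (V : Lp ℂ 2 μ01 → Lp ℂ 2 μ01) : Prop :=
  ∀ f : Lp ℂ 2 μ01, ∀ᵐ x ∂μ01, (V f : ℝ → ℂ) x = ∫ t in (0:ℝ)..x, (f : ℝ → ℂ) t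

section Aux

open MeasureTheory Filter
open scoped ENNReal NNReal

lemma Lp_coeFn_sum {ι : Type*} (s : Finset ι) (g : ι → Lp ℂ 2 μ01) :
    ⇑(∑ i ∈ s, g i) =ᵐ[μ01] fun x => ∑ i ∈ s, g i x := by
  classical
  induction s using Finset.induction_on with
  | empty =>
    simp only [Finset.sum_empty]
    exact Lp.coeFn_zero (E := ℂ) (p := 2) (μ := μ01)
  | insert a s h ih =>
      rw [Finset.sum_insert h]
      filter_upwards [Lp.coeFn_add (g a) (∑ i ∈ s, g i), ih] with x hx hx2
      simp only [hx, Pi.add_apply, hx2, Finset.sum_insert h]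

lemma eN_coeFn (N : ℕ) (i : Fin N) :
    ⇑(eN N i) =ᵐ[μ01]
      (Set.Icc ((i : ℝ) / N) (((i : ℝ) + 1) / N)).indicator
        (fun _ => ((Real.sqrt N : ℝ) : ℂ)) :=
  indicatorConstLp_coeFn

lemma inner_eN (N : ℕ) (i : Fin N) (f : Lp ℂ 2 μ01) :
    @inner ℂ _ _ (eN N i) f
      = ((Real.sqrt N : ℝ) : ℂ) *
          ∫ x in Set.Icc ((i : ℝ) / N) (((i : ℝ) + 1) / N), f x ∂μ01 := by
  rw [show eN N i = indicatorConstLp 2 (measurableSet_Icc :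
      MeasurableSet (Set.Icc ((i : ℝ) / N) (((i : ℝ) + 1) / N)))
    (measure_ne_top μ01 _) ((Real.sqrt N : ℝ) : ℂ) from rfl]
  rw [MeasureTheory.L2.inner_indicatorConstLp_eq_inner_setIntegral ℂ _ _ _ f]
  simp [RCLike.inner_apply, Complex.conj_ofReal]
  exact mul_comm _ _

lemma f_integrableOn (f : Lp ℂ 2 μ01) : IntegrableOn (f : ℝ → ℂ) (Set.Icc (0:ℝ) 1) volume := by
  have h : Integrable (f : ℝ → ℂ) μ01 :=
    (MeasureTheory.Lp.memLp f).integrable (by norm_num)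
  exact h

lemma f_intervalIntegrable (f : Lp ℂ 2 μ01) {a b : ℝ} (h0 : 0 ≤ a) (hab : a ≤ b) (hb : b ≤ 1) :
    IntervalIntegrable (f : ℝ → ℂ) volume a b := by
  rw [intervalIntegrable_iff_integrableOn_Icc_of_le hab]
  exact (f_integrableOn f).mono_set (Set.Icc_subset_Icc h0 hb)

lemma setInt (f : Lp ℂ 2 μ01) {a b : ℝ} (h0 : 0 ≤ a) (hab : a ≤ b) (hb : b ≤ 1) :
    ∫ x in Set.Icc a b, (f : ℝ → ℂ) x ∂μ01
      = (∫ t in (0:ℝ)..b, (f : ℝ → ℂ) t) - ∫ t in (0:ℝ)..a, (f : ℝ → ℂ) t := by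
  have hsub : Set.Icc a b ∩ Set.Icc (0:ℝ) 1 = Set.Icc a b :=
    Set.inter_eq_self_of_subset_left (Set.Icc_subset_Icc h0 hb)
  have hres : μ01.restrict (Set.Icc a b) = volume.restrict (Set.Icc a b) := by
    show (volume.restrict (Set.Icc (0:ℝ) 1)).restrict (Set.Icc a b) = _
    rw [Measure.restrict_restrict measurableSet_Icc, hsub]
  have h1 : ∫ x in Set.Icc a b, (f : ℝ → ℂ) x ∂μ01
      = ∫ x in Set.Icc a b, (f : ℝ → ℂ) x ∂volume := by
    rw [hres]
  rw [h1, MeasureTheory.integral_Icc_eq_integral_Ioc,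
    ← intervalIntegral.integral_of_le hab,
    intervalIntegral.integral_interval_sub_left
      (f_intervalIntegrable f le_rfl (h0.trans hab) hb)
      (f_intervalIntegrable f le_rfl h0 (hab.trans hb))]

end Aux


lemma matVec_TM_apply (N : ℕ) (f : Lp ℂ 2 μ01) (i : Fin N) :
    (matVec (TM N) (Wstar N f)) i
      = ∑ j : Fin N, (if j ≤ i then ((N : ℂ))⁻¹ else 0) * @inner ℂ _ _ (eN N j) f := rfl

lemma sqrt_mul_self_C (N : ℕ) :
    ((Real.sqrt N : ℝ) : ℂ) * ((Real.sqrt N : ℝ) : ℂ) = (N : ℂ) := by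
  rw [← Complex.ofReal_mul, Real.mul_self_sqrt (Nat.cast_nonneg N)]
  norm_cast

lemma coeff_eval (N : ℕ) (f : Lp ℂ 2 μ01) (i : Fin N) :
    (matVec (TM N) (Wstar N f)) i * ((Real.sqrt N : ℝ) : ℂ)
      = ∫ t in (0:ℝ)..(((i : ℝ) + 1) / N), (f : ℝ → ℂ) t := by
  have hN : 0 < N := i.pos
  have hNR : (0:ℝ) < N := by exact_mod_cast hN
  have hNC : (N : ℂ) ≠ 0 := Nat.cast_ne_zero.mpr hN.ne'
  set F : ℕ → ℂ := fun k => ∫ t in (0:ℝ)..((k : ℝ) / N), (f : ℝ → ℂ) t with hF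
  have hterm : ∀ j : Fin N,
      (if j ≤ i then ((N : ℂ))⁻¹ else 0) * @inner ℂ _ _ (eN N j) f * ((Real.sqrt N : ℝ) : ℂ)
        = if (j : ℕ) ≤ (i : ℕ) then F ((j : ℕ) + 1) - F (j : ℕ) else 0 := by
    intro j
    rw [inner_eN]
    by_cases hji : j ≤ i
    · rw [if_pos hji, if_pos (Fin.le_def.mp hji)]
      have h1 : ((j : ℝ) + 1) / N = ((((j : ℕ) + 1 : ℕ)) : ℝ) / N := by push_cast; ring
      have hI : ∫ x in Set.Icc ((j : ℝ) / N) (((j : ℝ) + 1) / N), (f : ℝ → ℂ) x ∂μ01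
          = F ((j : ℕ) + 1) - F (j : ℕ) := by
        rw [h1]
        have := setInt f (a := ((j:ℕ) : ℝ) / N) (b := ((((j:ℕ) + 1 : ℕ)) : ℝ) / N)
          (by positivity)
          (by gcongr <;> push_cast <;> linarith)
          (by
            rw [div_le_one hNR]
            exact_mod_cast Nat.succ_le_of_lt j.isLt)
        exact this
      rw [hI]
      have key : ∀ z : ℂ, ((N : ℂ))⁻¹ * (((Real.sqrt N : ℝ) : ℂ) * z) * ((Real.sqrt N : ℝ) : ℂ)
          = z := by
        intro z
        calc ((N : ℂ))⁻¹ * (((Real.sqrt N : ℝ) : ℂ) * z) * ((Real.sqrt N : ℝ) : ℂ)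
            = ((N : ℂ))⁻¹ * (((Real.sqrt N : ℝ) : ℂ) * ((Real.sqrt N : ℝ) : ℂ)) * z := by ring
          _ = ((N : ℂ))⁻¹ * (N : ℂ) * z := by rw [sqrt_mul_self_C]
          _ = z := by field_simp
      exact key _
    · rw [if_neg hji, if_neg (fun h => hji (Fin.le_def.mpr h))]
      ring
  rw [matVec_TM_apply, Finset.sum_mul]
  simp only [hterm]
  rw [Fin.sum_univ_eq_sum_range (fun k => if k ≤ (i : ℕ) then F (k + 1) - F k else 0) N]
  have hrange : ∑ k ∈ Finset.range N, (if k ≤ (i : ℕ) then F (k + 1) - F k else 0)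
      = ∑ k ∈ Finset.range ((i : ℕ) + 1), (F (k + 1) - F k) := by
    rw [← Finset.sum_filter]
    congr 1
    ext k
    have := i.isLt
    simp only [Finset.mem_filter, Finset.mem_range]
    omega
  rw [hrange, Finset.sum_range_sub F]
  have hF0 : F 0 = 0 := by simp [hF]
  have hFi : F ((i : ℕ) + 1) = ∫ t in (0:ℝ)..(((i : ℝ) + 1) / N), (f : ℝ → ℂ) t := by
    simp only [hF]
    norm_num
  rw [hF0, hFi, sub_zero]



lemma Fdiff_bound (f : Lp ℂ 2 μ01) {a b : ℝ} (h0 : 0 ≤ a) (hab : a ≤ b) (hb : b ≤ 1) :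
    ‖(∫ t in (0:ℝ)..b, (f : ℝ → ℂ) t) - ∫ t in (0:ℝ)..a, (f : ℝ → ℂ) t‖
      ≤ ‖f‖ * Real.sqrt (b - a) := by
  rw [← setInt f h0 hab hb]
  have h1 : ∫ x in Set.Icc a b, (f : ℝ → ℂ) x ∂μ01
      = @inner ℂ _ _ (indicatorConstLp 2 (measurableSet_Icc : MeasurableSet (Set.Icc a b))
          (measure_ne_top μ01 _) (1 : ℂ)) f := by
    rw [MeasureTheory.L2.inner_indicatorConstLp_eq_inner_setIntegral ℂ _ _ _ f]
    simp [RCLike.inner_apply]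
  rw [h1]
  have hind : ‖(indicatorConstLp 2 (measurableSet_Icc : MeasurableSet (Set.Icc a b))
      (measure_ne_top μ01 _) (1 : ℂ) : Lp ℂ 2 μ01)‖ ≤ Real.sqrt (b - a) := by
    rw [norm_indicatorConstLp (by norm_num) (by norm_num)]
    simp only [norm_one, one_mul]
    have hμ : (μ01 (Set.Icc a b)).toReal ≤ b - a := by
      have h2 : μ01 (Set.Icc a b) ≤ volume (Set.Icc a b) := by
        rw [show μ01 (Set.Icc a b)
            = volume (Set.Icc a b ∩ Set.Icc (0:ℝ) 1) from
          Measure.restrict_apply measurableSet_Icc]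
        exact measure_mono Set.inter_subset_left
      have h3 : volume (Set.Icc a b) = ENNReal.ofReal (b - a) := Real.volume_Icc
      calc (μ01 (Set.Icc a b)).toReal ≤ (volume (Set.Icc a b)).toReal :=
          ENNReal.toReal_mono (by rw [h3]; exact ENNReal.ofReal_ne_top) h2
        _ = b - a := by rw [h3, ENNReal.toReal_ofReal (by linarith)]
    calc (μ01 (Set.Icc a b)).toReal ^ (1 / (2 : ℝ≥0∞).toReal)
        = Real.sqrt ((μ01 (Set.Icc a b)).toReal) := by
          rw [Real.sqrt_eq_rpow]; norm_num
      _ ≤ Real.sqrt (b - a) := Real.sqrt_le_sqrt hμ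
  calc ‖@inner ℂ _ _ (indicatorConstLp 2 (measurableSet_Icc : MeasurableSet (Set.Icc a b))
          (measure_ne_top μ01 _) (1 : ℂ)) f‖
      ≤ ‖(indicatorConstLp 2 (measurableSet_Icc : MeasurableSet (Set.Icc a b))
          (measure_ne_top μ01 _) (1 : ℂ) : Lp ℂ 2 μ01)‖ * ‖f‖ := norm_inner_le_norm _ _
    _ ≤ Real.sqrt (b - a) * ‖f‖ := by
        exact mul_le_mul_of_nonneg_right hind (norm_nonneg f)
    _ = ‖f‖ * Real.sqrt (b - a) := mul_comm _ _

lemma key_bound (N : ℕ) (hN : 1 ≤ N) (V : Lp ℂ 2 μ01 → Lp ℂ 2 μ01) (hV : IsVolterra V)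
    (f : Lp ℂ 2 μ01) :
    ‖Wmap N (matVec (TM N) (Wstar N f)) - V f‖ ≤ ‖f‖ / Real.sqrt N := by
  have hNR : (0:ℝ) < N := by exact_mod_cast hN
  set c := matVec (TM N) (Wstar N f) with hc
  have hsum : ⇑(Wmap N c) =ᵐ[μ01] fun x => ∑ i : Fin N, (c i • eN N i : Lp ℂ 2 μ01) x :=
    Lp_coeFn_sum Finset.univ (fun i => c i • eN N i)
  have hae : ∀ᵐ x ∂μ01, ∀ i : Fin N, (c i • eN N i : Lp ℂ 2 μ01) x
      = c i * (Set.Icc ((i : ℝ) / N) (((i : ℝ) + 1) / N)).indicator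
          (fun _ => ((Real.sqrt N : ℝ) : ℂ)) x := by
    rw [MeasureTheory.ae_all_iff]
    intro i
    filter_upwards [Lp.coeFn_smul (c i) (eN N i), eN_coeFn N i] with x h1 h2
    rw [h1]
    simp [h2, smul_eq_mul]
  have hgrid : ∀ᵐ x ∂μ01, ∀ k : ℕ, x ≠ (k : ℝ) / N := by
    rw [MeasureTheory.ae_all_iff]
    intro k
    have h0 : μ01 {(k : ℝ) / N} = 0 := by
      refine le_antisymm (le_trans (Measure.le_iff'.mp Measure.restrict_le_self _) ?_) zero_le
      simp [Real.volume_singleton]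
    rw [ae_iff]
    simpa [not_not, Set.setOf_eq_eq_singleton] using h0
  have hmem : ∀ᵐ x ∂μ01, x ∈ Set.Icc (0:ℝ) 1 :=
    ae_restrict_mem measurableSet_Icc
  have hptw : ∀ᵐ x ∂μ01, ‖(Wmap N c - V f : Lp ℂ 2 μ01) x‖ ≤ ‖f‖ / Real.sqrt N := by
    filter_upwards [Lp.coeFn_sub (Wmap N c) (V f), hsum, hae, hgrid, hmem, hV f]
      with x hsx hx hix hgx hmx hVx
    rw [hsx, Pi.sub_apply, hx, hVx]
    have hx0 : 0 ≤ x := hmx.1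
    have hx1 : x ≤ 1 := hmx.2
    have hxpos : 0 < x := lt_of_le_of_ne hx0 (by
      intro h
      exact hgx 0 (by simp [← h]))
    have hxlt1 : x < 1 := lt_of_le_of_ne hx1 (by
      intro h
      exact hgx N (by rw [h, div_self hNR.ne']))
    have hxN0 : 0 ≤ x * N := by positivity
    set n : ℕ := ⌊x * N⌋₊ with hn
    have hnlt : n < N := by
      rw [hn, Nat.floor_lt hxN0]
      nlinarith
    set i : Fin N := ⟨n, hnlt⟩ with hi
    have hge : (n : ℝ) / N ≤ x := by
      rw [div_le_iff₀ hNR]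
      exact Nat.floor_le hxN0
    have hlt : x < ((n : ℝ) + 1) / N := by
      rw [lt_div_iff₀ hNR]
      exact Nat.lt_floor_add_one (x * N)
    have hnotmem : ∀ j : Fin N, j ≠ i →
        x ∉ Set.Icc ((j : ℝ) / N) (((j : ℝ) + 1) / N) := by
      intro j hj hmem'
      apply hj
      have hj1 : (j : ℝ) / N < x := lt_of_le_of_ne hmem'.1 (fun h => hgx j h.symm)
      have hj2 : x < ((j : ℝ) + 1) / N := by
        refine lt_of_le_of_ne hmem'.2 ?_
        intro h
        exact hgx ((j : ℕ) + 1) (by push_cast; push_cast at h; linarith)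
      have hle1 : (j : ℕ) ≤ n := by
        rw [hn]
        apply Nat.le_floor
        rw [div_lt_iff₀ hNR] at hj1
        exact hj1.le
      have hle2 : n ≤ (j : ℕ) := by
        have : x * N < (j : ℝ) + 1 := by
          rw [lt_div_iff₀ hNR] at hj2
          exact hj2
        have h4 : n < (j : ℕ) + 1 := by
          rw [hn, Nat.floor_lt hxN0]
          push_cast
          linarith
        omega
      exact Fin.ext (le_antisymm hle1 hle2)
    have hsum_eq : (∑ i' : Fin N, c i' * (Set.Icc ((i' : ℝ) / N) (((i' : ℝ) + 1) / N)).indicator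
          (fun _ => ((Real.sqrt N : ℝ) : ℂ)) x)
        = c i * ((Real.sqrt N : ℝ) : ℂ) := by
      rw [Finset.sum_eq_single i]
      · rw [Set.indicator_of_mem (Set.mem_Icc.mpr ⟨hge, hlt.le⟩)]
      · intro j _ hj
        rw [Set.indicator_of_notMem (hnotmem j hj), mul_zero]
      · intro h
        exact absurd (Finset.mem_univ i) h
    calc ‖(∑ i' : Fin N, (c i' • eN N i' : Lp ℂ 2 μ01) x) - ∫ t in (0:ℝ)..x, (f : ℝ → ℂ) t‖
        = ‖(∫ t in (0:ℝ)..(((n : ℝ) + 1) / N), (f : ℝ → ℂ) t)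
            - ∫ t in (0:ℝ)..x, (f : ℝ → ℂ) t‖ := by
          congr 1
          rw [Finset.sum_congr rfl (fun j _ => hix j), hsum_eq, coeff_eval N f i]
      _ ≤ ‖f‖ * Real.sqrt (((n : ℝ) + 1) / N - x) := by
          refine Fdiff_bound f hx0 hlt.le ?_
          rw [div_le_one hNR]
          exact_mod_cast Nat.succ_le_of_lt hnlt
      _ ≤ ‖f‖ * Real.sqrt (1 / N) := by
          gcongr
          have : (n : ℝ) / N ≤ x := hge
          have h5 : ((n : ℝ) + 1) / N - (n : ℝ) / N = 1 / N := by field_simp; ring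
          linarith
      _ = ‖f‖ / Real.sqrt N := by
          rw [one_div, Real.sqrt_inv, div_eq_mul_inv]
  have hC : (0:ℝ) ≤ ‖f‖ / Real.sqrt N := by positivity
  have hb := MeasureTheory.Lp.norm_le_of_ae_bound hC hptw
  have huniv : measureUnivNNReal μ01 = 1 := by
    have h1 : μ01 Set.univ = 1 := by
      rw [show μ01 Set.univ = volume (Set.Icc (0:ℝ) 1) from Measure.restrict_apply_univ _]
      simp [Real.volume_Icc]
    simp [measureUnivNNReal, h1]
  rw [huniv] at hb
  simpa using hb

/-- **Lemma 2.1 of the paper.** `W_N T_N W_N^* → V` in the strong operator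
topology: for every `f ∈ L²[0,1]`, `‖W_N T_N W_N^*(f) - V(f)‖ → 0`. -/
theorem WTW_tendsto_volterra_SOT
    (V : Lp ℂ 2 μ01 → Lp ℂ 2 μ01) (hV : IsVolterra V)
    (f : Lp ℂ 2 μ01) :
    Tendsto (fun N => ‖Wmap N (matVec (TM N) (Wstar N f)) - V f‖)
      atTop (nhds 0) := by
  refine squeeze_zero' (g := fun N : ℕ => ‖f‖ / Real.sqrt N)
    (Filter.Eventually.of_forall fun N => norm_nonneg _) ?_ ?_
  · filter_upwards [Filter.eventually_ge_atTop 1] with N hN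
    exact key_bound N hN V hV f
  · have h1 : Tendsto (fun N : ℕ => Real.sqrt N) atTop atTop := by
      have h2 := (tendsto_rpow_atTop (by norm_num : (0:ℝ) < 1/2)).comp
        (tendsto_natCast_atTop_atTop (R := ℝ))
      refine h2.congr fun n => ?_
      exact (Real.sqrt_eq_rpow _).symm
    have h3 := h1.inv_tendsto_atTop.const_mul ‖f‖
    simpa [div_eq_mul_inv] using h3

end
end

section
/- Let $\{a_N\}_{N=0}^\infty$ be an increasing sequence of positive integers. Suppose there exists a positive sequence $\{k(N)\}$ such that $k(N)\,\sigma_{a_N}/\sqrt{a_N} \to 0$ and $\sum_{N=1}^\infty 1/k(N)^2 < \infty$. Then for every $u \in L^2[0,1]$, almost surely $\|W_{a_N}(\mu_{a_N} T_{a_N} - X_{a_N}) W_{a_N}^* u\|_{L^2} \to 0$ as $N \to \infty$. -/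
open MeasureTheory ProbabilityTheory Filter

noncomputable section

lemma inner_eN_s5 (N : ℕ) (i j : Fin N) :
    (@inner ℂ _ _ (eN N i) (eN N j)) = if i = j then 1 else 0 := by
  classical
  have hN0 : 0 < N := i.pos
  have hNpos : (0:ℝ) < N := by exact_mod_cast hN0
  set c : ℂ := ((Real.sqrt N : ℝ) : ℂ) with hc
  set Si := Set.Icc ((i:ℝ)/N) (((i:ℝ)+1)/N) with hSi
  set Sj := Set.Icc ((j:ℝ)/N) (((j:ℝ)+1)/N) with hSj
  have hmi : MeasurableSet Si := measurableSet_Icc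
  have hmj : MeasurableSet Sj := measurableSet_Icc
  have hcc : c * c = (N : ℂ) := by
    rw [hc, ← Complex.ofReal_mul, Real.mul_self_sqrt (Nat.cast_nonneg N)]
    norm_cast
  have step1 : (@inner ℂ _ _ (eN N i) (eN N j))
      = ∫ x in Si, c * ((eN N j : ℝ → ℂ) x) ∂μ01 := by
    rw [eN, L2.inner_indicatorConstLp_eq_setIntegral_inner]
    refine setIntegral_congr_ae hmi (Eventually.of_forall fun x _ => ?_)
    simp [RCLike.inner_apply, hc, Complex.conj_ofReal]
    ring
  have hcoe : (eN N j : ℝ → ℂ) =ᵐ[μ01] Sj.indicator fun _ => c :=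
    indicatorConstLp_coeFn
  have step2 : (∫ x in Si, c * ((eN N j : ℝ → ℂ) x) ∂μ01)
      = ∫ x in Si, c * (Sj.indicator (fun _ => c) x) ∂μ01 := by
    refine integral_congr_ae (ae_restrict_of_ae ?_)
    exact hcoe.mono fun x hx => by dsimp only; rw [hx]
  have step3 : (∫ x in Si, c * (Sj.indicator (fun _ => c) x) ∂μ01)
      = (μ01 (Si ∩ Sj)).toReal • (c * c) := by
    rw [integral_const_mul, setIntegral_indicator hmj, setIntegral_const, mul_smul_comm]
    rfl
  rw [step1, step2, step3, hcc]
  by_cases hij : i = j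
  · subst hij
    have hsub : Si ⊆ Set.Icc (0:ℝ) 1 := by
      apply Set.Icc_subset_Icc
      · positivity
      · rw [div_le_one hNpos]
        have := i.isLt
        exact_mod_cast Nat.succ_le_of_lt this
    have hμ : μ01 (Si ∩ Si) = ENNReal.ofReal (1 / N) := by
      rw [Set.inter_self, μ01, Measure.restrict_apply hmi,
        Set.inter_eq_left.mpr hsub, hSi, Real.volume_Icc]
      congr 1
      ring
    rw [if_pos rfl, hμ, ENNReal.toReal_ofReal (by positivity)]
    rw [Complex.real_smul]
    push_cast
    rw [one_div, inv_mul_cancel₀ (by exact_mod_cast hN0.ne' : (N:ℂ) ≠ 0)]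
  · have hμ : μ01 (Si ∩ Sj) = 0 := by
      have hle : μ01 (Si ∩ Sj) ≤ volume (Si ∩ Sj) := by
        rw [μ01, Measure.restrict_apply (hmi.inter hmj)]
        exact measure_mono Set.inter_subset_left
      have hvol : volume (Si ∩ Sj) = 0 := by
        rw [hSi, hSj, Set.Icc_inter_Icc, Real.volume_Icc]
        rw [ENNReal.ofReal_eq_zero]
        rcases lt_or_gt_of_ne hij with h | h
        · have h1 : ((i:ℝ) + 1) / N ≤ (j:ℝ) / N := by
            have : ((i:ℝ)) + 1 ≤ (j:ℝ) := by exact_mod_cast (h : (i:ℕ) < (j:ℕ))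
            gcongr
          calc min (((i:ℝ)+1)/N) (((j:ℝ)+1)/N) - max ((i:ℝ)/N) ((j:ℝ)/N)
              ≤ ((i:ℝ)+1)/N - (j:ℝ)/N := by
                apply sub_le_sub (min_le_left _ _) (le_max_right _ _)
            _ ≤ 0 := by linarith
        · have h1 : ((j:ℝ) + 1) / N ≤ (i:ℝ) / N := by
            have : ((j:ℝ)) + 1 ≤ (i:ℝ) := by exact_mod_cast (h : (j:ℕ) < (i:ℕ))
            gcongr
          calc min (((i:ℝ)+1)/N) (((j:ℝ)+1)/N) - max ((i:ℝ)/N) ((j:ℝ)/N)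
              ≤ ((j:ℝ)+1)/N - (i:ℝ)/N := by
                apply sub_le_sub (min_le_right _ _) (le_max_left _ _)
            _ ≤ 0 := by linarith
      exact le_antisymm (hle.trans_eq hvol) zero_le
    rw [if_neg hij, hμ]
    simp

lemma eN_orthonormal (N : ℕ) : Orthonormal ℂ (eN N) :=
  orthonormal_iff_ite.mpr (inner_eN_s5 N)

lemma euclid_norm_sq {N : ℕ} (w : EuclideanSpace ℂ (Fin N)) :
    ‖w‖ ^ 2 = ∑ i, ‖w i‖ ^ 2 := by
  rw [EuclideanSpace.norm_eq, Real.sq_sqrt (Finset.sum_nonneg fun i _ => sq_nonneg _)]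

lemma norm_Wmap (N : ℕ) (v : EuclideanSpace ℂ (Fin N)) : ‖Wmap N v‖ = ‖v‖ := by
  have h1 : (@inner ℂ _ _ (Wmap N v) (Wmap N v)) = ∑ i, (starRingEnd ℂ) (v i) * v i := by
    rw [Wmap, (eN_orthonormal N).inner_sum v v Finset.univ]
  have h : ‖Wmap N v‖ ^ 2 = ‖v‖ ^ 2 := by
    rw [euclid_norm_sq, ← inner_self_eq_norm_sq (𝕜 := ℂ), h1]
    rw [show (RCLike.re : ℂ →+ ℝ) = Complex.reAddGroupHom from rfl]
    rw [map_sum]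
    refine Finset.sum_congr rfl fun i _ => ?_
    rw [Complex.sq_norm, Complex.normSq_apply]
    show ((starRingEnd ℂ) (v i) * v i).re = _
    rw [Complex.mul_re]
    simp
  calc ‖Wmap N v‖ = Real.sqrt (‖Wmap N v‖ ^ 2) := (Real.sqrt_sq (norm_nonneg _)).symm
    _ = Real.sqrt (‖v‖ ^ 2) := by rw [h]
    _ = ‖v‖ := Real.sqrt_sq (norm_nonneg _)

lemma norm_Wstar_le (N : ℕ) (u : Lp ℂ 2 μ01) : ‖Wstar N u‖ ≤ ‖u‖ := by
  rw [EuclideanSpace.norm_eq]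
  have hb := (eN_orthonormal N).sum_inner_products_le (s := Finset.univ) u
  have : Real.sqrt (∑ i, ‖Wstar N u i‖ ^ 2) ≤ Real.sqrt (‖u‖ ^ 2) := by
    apply Real.sqrt_le_sqrt
    simpa [Wstar] using hb
  simpa [Real.sqrt_sq (norm_nonneg u)] using this

lemma variance_const_sub {Ω : Type*} [MeasureSpace Ω] [IsProbabilityMeasure (ℙ : Measure Ω)]
    (c : ℝ) (X : Ω → ℝ) (hX : MemLp X 2 ℙ) :
    variance (fun ω => c - X ω) ℙ = variance X ℙ := by
  have h1 : MemLp (fun ω => c - X ω) 2 ℙ := (memLp_const c).sub hX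
  have hXi : Integrable X ℙ := hX.integrable one_le_two
  have hX2 : Integrable (fun ω => X ω ^ 2) ℙ := hX.integrable_sq
  rw [variance_eq_sub h1, variance_eq_sub hX]
  have e1 : (fun ω => c - X ω) ^ 2 = fun ω => c ^ 2 - 2 * c * X ω + X ω ^ 2 := by
    funext ω; simp [Pi.pow_apply]; ring
  have e2 : ∫ ω, (c - X ω) ∂ℙ = c - ∫ ω, X ω ∂ℙ := by
    rw [integral_sub (integrable_const c) hXi, integral_const]; simp
  have e3 : (X ^ 2) = fun ω => X ω ^ 2 := rfl
  have hint1 : Integrable (fun ω => c ^ 2 - 2 * c * X ω) ℙ := by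
    exact (integrable_const _).sub (hXi.const_mul _)
  have hint2 : Integrable (fun ω => (2 : ℝ) * c * X ω) ℙ := hXi.const_mul _
  rw [e1, e3, e2, integral_add hint1 hX2,
    integral_sub (integrable_const _) hint2, integral_const,
    integral_const_mul]
  simp only [probReal_univ, measure_univ, ENNReal.toReal_one, smul_eq_mul, one_mul]
  ring

lemma row_sq_integral {Ω : Type*} [MeasureSpace Ω] [IsProbabilityMeasure (ℙ : Measure Ω)]
    {N : ℕ} (X : Fin N → Fin N → Ω → ℝ) (μN σN : ℝ)
    (hindep : iIndepFun (fun p : LTri N => X p.1.1 p.1.2) ℙ)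
    (hL2 : ∀ i j : Fin N, j ≤ i → MemLp (X i j) 2 ℙ)
    (hmean : ∀ i j : Fin N, j ≤ i → ∫ ω, X i j ω ∂ℙ = μN)
    (hvar : ∀ i j : Fin N, j ≤ i → variance (X i j) ℙ = σN ^ 2)
    (i : Fin N) (c : Fin N → ℝ) :
    MemLp (fun ω => ∑ j ∈ Finset.univ.filter (· ≤ i), c j * (μN - X i j ω)) 2 ℙ ∧
    ∫ ω, (∑ j ∈ Finset.univ.filter (· ≤ i), c j * (μN - X i j ω)) ^ 2 ∂ℙ
      = ∑ j ∈ Finset.univ.filter (· ≤ i), (c j) ^ 2 * σN ^ 2 := by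
  classical
  set s : Finset (Fin N) := Finset.univ.filter (· ≤ i) with hs
  have hsle : ∀ j ∈ s, j ≤ i := fun j hj => by simpa [hs] using hj
  set f : Fin N → Ω → ℝ := fun j ω => c j * (μN - X i j ω) with hf
  have hmemj : ∀ j ∈ s, MemLp (f j) 2 ℙ := fun j hj =>
    ((memLp_const μN).sub (hL2 i j (hsle j hj))).const_mul (c j)
  have hpair : Set.Pairwise ↑s fun j j' => IndepFun (f j) (f j') ℙ := by
    intro j hj j' hj' hne
    have hj1 : j ≤ i := hsle j (by simpa using hj)
    have hj'1 : j' ≤ i := hsle j' (by simpa using hj')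
    have hpq : (⟨(i, j), hj1⟩ : LTri N) ≠ (⟨(i, j'), hj'1⟩ : LTri N) := by
      intro h
      exact hne (congrArg (fun p : LTri N => p.1.2) h)
    have hbase : IndepFun (X i j) (X i j') ℙ := hindep.indepFun hpq
    have hφ : Measurable fun x : ℝ => c j * (μN - x) :=
      (measurable_const.sub measurable_id).const_mul _
    have hψ : Measurable fun x : ℝ => c j' * (μN - x) :=
      (measurable_const.sub measurable_id).const_mul _
    exact hbase.comp hφ hψ
  have hmemS : MemLp (∑ j ∈ s, f j) 2 ℙ := memLp_finset_sum' s hmemj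
  have hfun : (fun ω => ∑ j ∈ s, c j * (μN - X i j ω)) = ∑ j ∈ s, f j := by
    funext ω; simp [hf]
  have hvarS : variance (∑ j ∈ s, f j) ℙ = ∑ j ∈ s, (c j) ^ 2 * σN ^ 2 := by
    rw [IndepFun.variance_sum hmemj hpair]
    refine Finset.sum_congr rfl fun j hj => ?_
    have : variance (f j) ℙ = (c j) ^ 2 * variance (fun ω => μN - X i j ω) ℙ := by
      rw [hf]; exact variance_const_mul (c j) _ ℙ
    rw [this, variance_const_sub _ _ (hL2 i j (hsle j hj)), hvar i j (hsle j hj)]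
  have hmean0 : ∫ ω, (∑ j ∈ s, f j) ω ∂ℙ = 0 := by
    have : ∀ ω, (∑ j ∈ s, f j) ω = ∑ j ∈ s, f j ω := fun ω => by simp
    simp_rw [this]
    rw [integral_finset_sum s fun j hj => (hmemj j hj).integrable one_le_two]
    refine Finset.sum_eq_zero fun j hj => ?_
    rw [hf]
    simp only []
    rw [integral_const_mul, integral_sub (integrable_const _)
      ((hL2 i j (hsle j hj)).integrable one_le_two), integral_const,
      hmean i j (hsle j hj)]
    simp
  refine ⟨by rw [hfun]; exact hmemS, ?_⟩
  have hv := variance_eq_sub hmemS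
  have hpow : ((∑ j ∈ s, f j) ^ 2) = fun ω => (∑ j ∈ s, c j * (μN - X i j ω)) ^ 2 := by
    funext ω; simp [hf]
  rw [hvarS, hpow, hmean0] at hv
  simp only [ne_eq] at hv
  linarith [hv]

lemma matrix_bound {Ω : Type*} [MeasureSpace Ω] [IsProbabilityMeasure (ℙ : Measure Ω)]
    {N : ℕ} (hN : 0 < N) (X : Fin N → Fin N → Ω → ℝ) (μN σN : ℝ)
    (hzero : ∀ i j : Fin N, i < j → ∀ ω, X i j ω = 0)
    (hindep : iIndepFun (fun p : LTri N => X p.1.1 p.1.2) ℙ)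
    (hL2 : ∀ i j : Fin N, j ≤ i → MemLp (X i j) 2 ℙ)
    (hmean : ∀ i j : Fin N, j ≤ i → ∫ ω, X i j ω ∂ℙ = μN)
    (hvar : ∀ i j : Fin N, j ≤ i → variance (X i j) ℙ = σN ^ 2)
    (v : EuclideanSpace ℂ (Fin N)) :
    Integrable (fun ω => ‖matVec ((μN : ℂ) • TM N - XM N X ω) v‖ ^ 2) ℙ ∧
    ∫ ω, ‖matVec ((μN : ℂ) • TM N - XM N X ω) v‖ ^ 2 ∂ℙ ≤ σN ^ 2 / N * ‖v‖ ^ 2 := by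
  classical
  set cre : Fin N → ℝ := fun j => (v j).re * (N : ℝ)⁻¹ with hcre
  set cim : Fin N → ℝ := fun j => (v j).im * (N : ℝ)⁻¹ with hcim
  set R : Fin N → Ω → ℝ := fun i ω => ∑ j ∈ Finset.univ.filter (· ≤ i), cre j * (μN - X i j ω)
  set Q : Fin N → Ω → ℝ := fun i ω => ∑ j ∈ Finset.univ.filter (· ≤ i), cim j * (μN - X i j ω)
  -- coordinates of matVec
  have wi : ∀ ω (i : Fin N), (matVec ((μN : ℂ) • TM N - XM N X ω) v) i
      = ∑ j ∈ Finset.univ.filter (· ≤ i), (((μN - X i j ω : ℝ)) : ℂ) * (N : ℂ)⁻¹ * v j := by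
    intro ω i
    rw [matVec, Matrix.toEuclideanLin_apply]
    show (Matrix.mulVec ((μN : ℂ) • TM N - XM N X ω) ((WithLp.equiv 2 (Fin N → ℂ)) v)) i = _
    rw [Finset.sum_filter]
    simp only [Matrix.mulVec, dotProduct]
    refine Finset.sum_congr rfl fun j _ => ?_
    by_cases hj : j ≤ i
    · simp only [Matrix.sub_apply, Matrix.smul_apply, TM, XM, Matrix.of_apply, if_pos hj,
        smul_eq_mul, WithLp.equiv_apply]
      push_cast
      ring
    · have hij : i < j := not_le.mp hj
      simp only [Matrix.sub_apply, Matrix.smul_apply, TM, XM, Matrix.of_apply, if_neg hj,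
        smul_eq_mul, hzero i j hij ω, WithLp.equiv_apply]
      simp
  have hNinv : ((N : ℂ))⁻¹ = (((N : ℝ)⁻¹ : ℝ) : ℂ) := by push_cast; ring
  have re_wi : ∀ ω (i : Fin N), ((matVec ((μN : ℂ) • TM N - XM N X ω) v) i).re = R i ω := by
    intro ω i
    rw [wi, Complex.re_sum]
    refine Finset.sum_congr rfl fun j _ => ?_
    rw [hNinv, ← Complex.ofReal_mul, Complex.re_ofReal_mul]
    ring
  have im_wi : ∀ ω (i : Fin N), ((matVec ((μN : ℂ) • TM N - XM N X ω) v) i).im = Q i ω := by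
    intro ω i
    rw [wi, Complex.im_sum]
    refine Finset.sum_congr rfl fun j _ => ?_
    rw [hNinv, ← Complex.ofReal_mul, Complex.im_ofReal_mul]
    ring
  have key : ∀ ω, ‖matVec ((μN : ℂ) • TM N - XM N X ω) v‖ ^ 2
      = ∑ i, (R i ω ^ 2 + Q i ω ^ 2) := by
    intro ω
    rw [euclid_norm_sq]
    refine Finset.sum_congr rfl fun i _ => ?_
    rw [Complex.sq_norm, Complex.normSq_apply, re_wi, im_wi]
    ring
  have hrowR := fun i => row_sq_integral X μN σN hindep hL2 hmean hvar i cre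
  have hrowQ := fun i => row_sq_integral X μN σN hindep hL2 hmean hvar i cim
  have hRint : ∀ i : Fin N, Integrable (fun ω => R i ω ^ 2) ℙ := fun i =>
    (hrowR i).1.integrable_sq
  have hQint : ∀ i : Fin N, Integrable (fun ω => Q i ω ^ 2) ℙ := fun i =>
    (hrowQ i).1.integrable_sq
  have hQRint : ∀ i : Fin N, Integrable (fun ω => R i ω ^ 2 + Q i ω ^ 2) ℙ := fun i =>
    (hRint i).add (hQint i)
  have hint : Integrable (fun ω => ‖matVec ((μN : ℂ) • TM N - XM N X ω) v‖ ^ 2) ℙ := by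
    have : (fun ω => ‖matVec ((μN : ℂ) • TM N - XM N X ω) v‖ ^ 2)
        = fun ω => ∑ i, (R i ω ^ 2 + Q i ω ^ 2) := funext key
    rw [this]
    exact integrable_finset_sum _ fun i _ => hQRint i
  refine ⟨hint, ?_⟩
  have hIeq : ∫ ω, ‖matVec ((μN : ℂ) • TM N - XM N X ω) v‖ ^ 2 ∂ℙ
      = ∑ i, (∑ j ∈ Finset.univ.filter (· ≤ i), (cre j) ^ 2 * σN ^ 2
            + ∑ j ∈ Finset.univ.filter (· ≤ i), (cim j) ^ 2 * σN ^ 2) := by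
    simp_rw [key]
    rw [integral_finset_sum _ fun i _ => hQRint i]
    refine Finset.sum_congr rfl fun i _ => ?_
    rw [integral_add (hRint i) (hQint i), (hrowR i).2, (hrowQ i).2]
  rw [hIeq]
  have hNr : (0:ℝ) < (N:ℝ) := by exact_mod_cast hN
  have step : ∀ i : Fin N, (∑ j ∈ Finset.univ.filter (· ≤ i), (cre j) ^ 2 * σN ^ 2
            + ∑ j ∈ Finset.univ.filter (· ≤ i), (cim j) ^ 2 * σN ^ 2)
      ≤ ∑ j : Fin N, ‖v j‖ ^ 2 * (N:ℝ)⁻¹ ^ 2 * σN ^ 2 := by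
    intro i
    have h1 : ∑ j ∈ Finset.univ.filter (· ≤ i), ((cre j) ^ 2 * σN ^ 2 + (cim j) ^ 2 * σN ^ 2)
        ≤ ∑ j : Fin N, ((cre j) ^ 2 * σN ^ 2 + (cim j) ^ 2 * σN ^ 2) := by
      apply Finset.sum_le_sum_of_subset_of_nonneg (Finset.filter_subset _ _)
      intro j _ _
      positivity
    rw [← Finset.sum_add_distrib]
    refine h1.trans (le_of_eq (Finset.sum_congr rfl fun j _ => ?_))
    rw [hcre, hcim, Complex.sq_norm, Complex.normSq_apply]
    ring
  calc ∑ i : Fin N, (∑ j ∈ Finset.univ.filter (· ≤ i), (cre j) ^ 2 * σN ^ 2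
            + ∑ j ∈ Finset.univ.filter (· ≤ i), (cim j) ^ 2 * σN ^ 2)
      ≤ ∑ _i : Fin N, ∑ j : Fin N, ‖v j‖ ^ 2 * (N:ℝ)⁻¹ ^ 2 * σN ^ 2 :=
        Finset.sum_le_sum fun i _ => step i
    _ = σN ^ 2 / N * ‖v‖ ^ 2 := by
        have hN0' : (N:ℝ) ≠ 0 := hNr.ne'
        rw [Finset.sum_const, Finset.card_univ, Fintype.card_fin, euclid_norm_sq,
          nsmul_eq_mul, Finset.mul_sum, Finset.mul_sum]
        refine Finset.sum_congr rfl fun j _ => ?_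
        field_simp

/-- **Lemma 2.3 of the paper.** If `{a_N}` is an increasing sequence of positive
integers and there is a positive sequence `{k(N)}` with `k(N)·σ_{a_N}/√(a_N) → 0`
and `∑ 1/k(N)² < ∞`, then for every `u ∈ L²[0,1]`, almost surely
`‖W_{a_N}(μ_{a_N} T_{a_N} - X_{a_N}) W_{a_N}^* u‖ → 0`. -/
theorem as_convergence_of_centered_part
    {Ω : Type*} [MeasureSpace Ω] [IsProbabilityMeasure (ℙ : Measure Ω)]
    (X : (N : ℕ) → Fin N → Fin N → Ω → ℝ)
    (μs σs : ℕ → ℝ) (hσ : ∀ N, 0 ≤ σs N)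
    (hmeas : ∀ N (i j : Fin N), Measurable (X N i j))
    (hzero : ∀ N (i j : Fin N), i < j → ∀ ω, X N i j ω = 0)
    (hindep : ∀ N, iIndepFun
      (fun p : LTri N => X N p.1.1 p.1.2) ℙ)
    (hident : ∀ N (p q : LTri N),
      IdentDistrib (X N p.1.1 p.1.2) (X N q.1.1 q.1.2) ℙ ℙ)
    (hL2 : ∀ N (i j : Fin N), j ≤ i → MemLp (X N i j) 2 ℙ)
    (hmean : ∀ N (i j : Fin N), j ≤ i → ∫ ω, X N i j ω ∂ℙ = μs N)
    (hvar : ∀ N (i j : Fin N), j ≤ i → variance (X N i j) ℙ = (σs N) ^ 2)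
    (a : ℕ → ℕ) (ha : StrictMono a) (ha0 : ∀ N, 0 < a N)
    (k : ℕ → ℝ) (hk : ∀ N, 0 < k N)
    (hkσ : Tendsto (fun N => k N * σs (a N) / Real.sqrt (a N)) atTop (nhds 0))
    (hksum : Summable fun N => 1 / (k N) ^ 2)
    (u : Lp ℂ 2 μ01) :
    ∀ᵐ ω ∂ℙ, Tendsto
      (fun N => ‖Wmap (a N) (matVec
        ((μs (a N) : ℂ) • TM (a N) - XM (a N) (X (a N)) ω)
        (Wstar (a N) u))‖)
      atTop (nhds 0) := by
  classical
  set F : ℕ → Ω → ℝ := fun m ω =>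
    ‖matVec ((μs (a m) : ℂ) • TM (a m) - XM (a m) (X (a m)) ω) (Wstar (a m) u)‖ ^ 2 with hF
  have hmb : ∀ m, Integrable (F m) ℙ ∧
      ∫ ω, F m ω ∂ℙ ≤ σs (a m) ^ 2 / (a m) * ‖Wstar (a m) u‖ ^ 2 := fun m =>
    matrix_bound (ha0 m) (X (a m)) (μs (a m)) (σs (a m)) (hzero (a m)) (hindep (a m))
      (hL2 (a m)) (hmean (a m)) (hvar (a m)) (Wstar (a m) u)
  set ε : ℕ → ℝ := fun m => k m * σs (a m) / Real.sqrt (a m) * ‖u‖ + 1 / k m with hε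
  have hεpos : ∀ m, 0 < ε m := by
    intro m
    apply add_pos_of_nonneg_of_pos
    · have ht : 0 ≤ k m * σs (a m) / Real.sqrt (a m) := by
        apply div_nonneg (mul_nonneg (hk m).le (hσ _)) (Real.sqrt_nonneg _)
      exact mul_nonneg ht (norm_nonneg u)
    · exact div_pos one_pos (hk m)
  have hIle : ∀ m, ∫ ω, F m ω ∂ℙ ≤ (ε m) ^ 2 * (1 / k m ^ 2) := by
    intro m
    have ham : (0:ℝ) < (a m : ℝ) := by exact_mod_cast ha0 m
    have hsqa : Real.sqrt (a m) ≠ 0 := (Real.sqrt_pos.mpr ham).ne'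
    have hkm : k m ≠ 0 := (hk m).ne'
    have h2 : ∫ ω, F m ω ∂ℙ ≤ σs (a m) ^ 2 / (a m) * ‖u‖ ^ 2 := by
      refine (hmb m).2.trans ?_
      apply mul_le_mul_of_nonneg_left _ (by positivity)
      exact pow_le_pow_left₀ (norm_nonneg _) (norm_Wstar_le _ u) 2
    have h3 : σs (a m) ^ 2 / (a m) * ‖u‖ ^ 2
        = (k m * σs (a m) / Real.sqrt (a m) * ‖u‖) ^ 2 * (1 / k m ^ 2) := by
      rw [mul_pow, div_pow, Real.sq_sqrt ham.le]
      field_simp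
    have h4 : (k m * σs (a m) / Real.sqrt (a m) * ‖u‖) ^ 2 ≤ (ε m) ^ 2 := by
      apply pow_le_pow_left₀
      · exact mul_nonneg (div_nonneg (mul_nonneg (hk m).le (hσ _)) (Real.sqrt_nonneg _))
          (norm_nonneg u)
      · exact le_add_of_nonneg_right (div_pos one_pos (hk m)).le
    calc ∫ ω, F m ω ∂ℙ ≤ σs (a m) ^ 2 / (a m) * ‖u‖ ^ 2 := h2
      _ = (k m * σs (a m) / Real.sqrt (a m) * ‖u‖) ^ 2 * (1 / k m ^ 2) := h3
      _ ≤ (ε m) ^ 2 * (1 / k m ^ 2) := by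
          apply mul_le_mul_of_nonneg_right h4 (by positivity)
  set A : ℕ → Set Ω := fun m => {ω | (ε m) ^ 2 ≤ F m ω} with hA
  have hPA : ∀ m, ℙ (A m) ≤ ENNReal.ofReal (1 / k m ^ 2) := by
    intro m
    have hnn : 0 ≤ᵐ[ℙ] F m := Eventually.of_forall fun ω => by
      rw [hF]; positivity
    have hmark := mul_meas_ge_le_integral_of_nonneg hnn (hmb m).1 ((ε m) ^ 2)
    have hεsq : 0 < (ε m) ^ 2 := pow_pos (hεpos m) 2
    have htr : (ℙ (A m)).toReal ≤ 1 / k m ^ 2 := by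
      have hh : (ε m) ^ 2 * (ℙ (A m)).toReal ≤ (ε m) ^ 2 * (1 / k m ^ 2) :=
        hmark.trans (hIle m)
      exact le_of_mul_le_mul_left hh hεsq
    calc ℙ (A m) = ENNReal.ofReal ((ℙ (A m)).toReal) :=
        (ENNReal.ofReal_toReal (measure_ne_top _ _)).symm
      _ ≤ ENNReal.ofReal (1 / k m ^ 2) := ENNReal.ofReal_le_ofReal htr
  have hsum : (∑' m, ℙ (A m)) ≠ ⊤ := by
    have h1 : (∑' m, ℙ (A m)) ≤ ∑' m, ENNReal.ofReal (1 / k m ^ 2) :=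
      ENNReal.tsum_le_tsum hPA
    have h2 : (∑' m, ENNReal.ofReal (1 / k m ^ 2)) = ENNReal.ofReal (∑' m, 1 / k m ^ 2) :=
      (ENNReal.ofReal_tsum_of_nonneg (fun m => by positivity) hksum).symm
    exact ne_top_of_le_ne_top (by rw [h2]; exact ENNReal.ofReal_ne_top) h1
  have hε0 : Tendsto ε atTop (nhds 0) := by
    have t1 : Tendsto (fun m => k m * σs (a m) / Real.sqrt (a m) * ‖u‖) atTop (nhds 0) := by
      have := hkσ.mul_const ‖u‖
      simpa using this
    have t2 : Tendsto (fun m => 1 / k m) atTop (nhds 0) := by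
      have h := hksum.tendsto_atTop_zero
      have h2 : Tendsto (fun m => Real.sqrt (1 / k m ^ 2)) atTop (nhds 0) := by
        have h3 := (Real.continuous_sqrt.tendsto 0).comp h
        rw [Real.sqrt_zero] at h3
        exact h3
      refine h2.congr fun m => ?_
      rw [show (1:ℝ) / k m ^ 2 = (1 / k m) ^ 2 by rw [div_pow, one_pow],
        Real.sqrt_sq (le_of_lt (div_pos one_pos (hk m)))]
    have h0 := t1.add t2
    rw [add_zero] at h0
    exact h0
  filter_upwards [ae_eventually_notMem hsum] with ω hω
  apply squeeze_zero' (Eventually.of_forall fun m => norm_nonneg _) _ hε0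
  filter_upwards [hω] with m hm
  rw [norm_Wmap]
  have h1 : F m ω ≤ (ε m) ^ 2 := le_of_lt (not_le.mp hm)
  calc ‖matVec ((μs (a m) : ℂ) • TM (a m) - XM (a m) (X (a m)) ω) (Wstar (a m) u)‖
      = Real.sqrt (F m ω) := by rw [hF, Real.sqrt_sq (norm_nonneg _)]
    _ ≤ Real.sqrt ((ε m) ^ 2) := Real.sqrt_le_sqrt h1
    _ = ε m := Real.sqrt_sq (hεpos m).le


end
end

section
/- Let $X_N$ be the random lower triangular matrix whose entries on and below the diagonal are i.i.d., each equal to $\frac{1}{\delta(N)\,N}$ with probability $\delta(N)$ and $0$ otherwise (so $\mu_N = 1$ and $\sigma_N^2 = \frac{1 - \delta(N)}{\delta(N)}$ for the rescaled entries). If $\delta(N)$ is bounded below by a positive constant, then for all $u, v \in L^2[0,1]$, almost surely $\langle W_N X_N W_N^*(u), v\rangle \to \langle V(u), v\rangle$ as $N \to \infty$. -/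
open MeasureTheory ProbabilityTheory Filter

noncomputable section

namespace SBAux

open Complex Set
open scoped ENNReal

lemma mu01_apply {s : Set ℝ} (hs : MeasurableSet s) (h : s ⊆ Set.Icc 0 1) :
    μ01 s = volume s := by
  rw [μ01, Measure.restrict_apply hs, Set.inter_eq_left.mpr h]

lemma mu01_le_volume (s : Set ℝ) : μ01 s ≤ volume s :=
  Measure.restrict_le_self s

instance : NullSingletonClass μ01 :=
  ⟨fun x => le_antisymm (le_trans (mu01_le_volume _) (by simp)) bot_le⟩

lemma Ii_subset (N : ℕ) (i : Fin N) :
    Set.Icc ((i:ℝ)/N) (((i:ℝ)+1)/N) ⊆ Set.Icc 0 1 := by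
  have hN : (0:ℝ) < N := by exact_mod_cast i.pos
  apply Set.Icc_subset_Icc
  · positivity
  · rw [div_le_one hN]
    have : (i:ℝ) + 1 ≤ N := by exact_mod_cast i.isLt
    linarith

lemma mu01_Ii (N : ℕ) (i : Fin N) :
    μ01 (Set.Icc ((i:ℝ)/N) (((i:ℝ)+1)/N)) = ENNReal.ofReal (1/N) := by
  have hN : (0:ℝ) < N := by exact_mod_cast i.pos
  rw [mu01_apply measurableSet_Icc (Ii_subset N i), Real.volume_Icc]
  congr 1
  field_simp
  ring

/-- the `cf` coefficient -/
def cf (N : ℕ) (j : Fin N) (f : Lp ℂ 2 μ01) : ℂ := @inner ℂ _ _ (eN N j) f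

lemma cf_eq (N : ℕ) (j : Fin N) (f : Lp ℂ 2 μ01) :
    cf N j f = (Real.sqrt N : ℂ) *
      ∫ x in Set.Icc ((j:ℝ)/N) (((j:ℝ)+1)/N), (f : ℝ → ℂ) x ∂μ01 := by
  rw [cf, eN, L2.inner_indicatorConstLp_eq_setIntegral_inner]
  simp_rw [RCLike.inner_apply', Complex.conj_ofReal]
  rw [MeasureTheory.integral_const_mul]


lemma inner_eN_f (N : ℕ) (i : Fin N) (f : Lp ℂ 2 μ01) :
    (@inner ℂ _ _ (eN N i) f) = (Real.sqrt N : ℂ) *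
      ∫ x in Set.Icc ((i:ℝ)/N) (((i:ℝ)+1)/N), (f : ℝ → ℂ) x ∂μ01 := cf_eq N i f

lemma orthonormal_eN (N : ℕ) : Orthonormal ℂ (eN N) := by
  rw [orthonormal_iff_ite]
  intro i j
  rw [inner_eN_f]
  have hcoe : (eN N j : ℝ → ℂ) =ᵐ[μ01]
      (Set.Icc ((j:ℝ)/N) (((j:ℝ)+1)/N)).indicator fun _ => ((Real.sqrt N : ℝ) : ℂ) :=
    indicatorConstLp_coeFn
  rw [setIntegral_congr_ae measurableSet_Icc (hcoe.mono fun x hx _ => hx)]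
  rw [integral_indicator measurableSet_Icc, Measure.restrict_restrict measurableSet_Icc]
  rw [setIntegral_const]
  by_cases hij : i = j
  · subst hij
    simp only [if_pos rfl, Set.inter_self]
    rw [measureReal_def, mu01_Ii]
    have hN : (0:ℝ) < N := by exact_mod_cast i.pos
    rw [ENNReal.toReal_ofReal (by positivity), Complex.real_smul]
    rw [← Complex.ofReal_mul, ← Complex.ofReal_mul, if_pos trivial, Complex.ofReal_eq_one]
    rw [show Real.sqrt N * (1/N * Real.sqrt N) = (Real.sqrt N * Real.sqrt N)/N by ring,
      Real.mul_self_sqrt hN.le]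
    field_simp
  · rw [if_neg hij]
    have hN : (0:ℝ) < N := by exact_mod_cast i.pos
    have hnull : μ01 (Set.Icc ((j:ℝ)/N) (((j:ℝ)+1)/N) ∩
        Set.Icc ((i:ℝ)/N) (((i:ℝ)+1)/N)) = 0 := by
      rw [Set.Icc_inter_Icc]
      have hb : ((j:ℝ)+1)/N ⊓ ((i:ℝ)+1)/N ≤ (j:ℝ)/N ⊔ (i:ℝ)/N := by
        rcases lt_or_gt_of_ne hij with h | h
        · have : (i:ℝ) + 1 ≤ (j:ℝ) := by exact_mod_cast Fin.lt_def.mp h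
          exact le_trans inf_le_right (le_trans (by gcongr) le_sup_left)
        · have : (j:ℝ) + 1 ≤ (i:ℝ) := by exact_mod_cast Fin.lt_def.mp h
          exact le_trans inf_le_left (le_trans (by gcongr) le_sup_right)
      have hv : volume (Set.Icc ((j:ℝ)/N ⊔ (i:ℝ)/N) (((j:ℝ)+1)/N ⊓ ((i:ℝ)+1)/N)) = 0 := by
        rw [Real.volume_Icc]
        exact ENNReal.ofReal_eq_zero.mpr (by linarith)
      exact le_antisymm (le_trans (mu01_le_volume _) hv.le) zero_le
    rw [measureReal_def, hnull]
    simp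


lemma bessel (N : ℕ) (f : Lp ℂ 2 μ01) :
    ∑ i : Fin N, ‖cf N i f‖ ^ 2 ≤ ‖f‖ ^ 2 :=
  (orthonormal_eN N).sum_inner_products_le f

lemma S_eq {N : ℕ} (M : Matrix (Fin N) (Fin N) ℂ) (u v : Lp ℂ 2 μ01) :
    (@inner ℂ _ _ v (Wmap N (matVec M (Wstar N u)))) =
    ∑ i, ∑ j, M i j * cf N j u * (starRingEnd ℂ) (cf N i v) := by
  rw [Wmap, inner_sum]
  refine Finset.sum_congr rfl fun i _ => ?_
  rw [inner_smul_right]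
  have ha : matVec M (Wstar N u) i = ∑ j, M i j * cf N j u := by
    rw [matVec, Wstar]
    simp [Matrix.toLpLin_apply, Matrix.mulVec, dotProduct, cf]
  rw [ha, ← inner_conj_symm v (eN N i), Finset.sum_mul]
  rfl

/-- the coefficient of `Y_{ij}` in the error term -/
def aC (u v : Lp ℂ 2 μ01) (N : ℕ) (p : Fin N × Fin N) : ℂ :=
  (N:ℂ)⁻¹ * cf N p.2 u * (starRingEnd ℂ) (cf N p.1 v)

/-- the triangle Finset -/
def tri (N : ℕ) : Finset (Fin N × Fin N) :=
  Finset.univ.filter fun p => p.2 ≤ p.1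

/-- the random error term -/
def ZZ {Ω : Type*} (X : (N : ℕ) → Fin N → Fin N → Ω → ℝ) (u v : Lp ℂ 2 μ01)
    (N : ℕ) (ω : Ω) : ℂ :=
  ∑ p ∈ tri N, aC u v N p * ((X N p.1 p.2 ω - 1 : ℝ) : ℂ)

/-- the deterministic term -/
def AA (u v : Lp ℂ 2 μ01) (N : ℕ) : ℂ :=
  ∑ i : Fin N, ∑ j : Fin N,
    (if j ≤ i then (N:ℂ)⁻¹ else 0) * cf N j u * (starRingEnd ℂ) (cf N i v)

lemma S_decomp {Ω : Type*} (X : (N : ℕ) → Fin N → Fin N → Ω → ℝ)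
    (hzero : ∀ N (i j : Fin N), i < j → ∀ ω, X N i j ω = 0)
    (u v : Lp ℂ 2 μ01) (N : ℕ) (ω : Ω) :
    (@inner ℂ _ _ v (Wmap N (matVec (XM N (X N) ω) (Wstar N u)))) =
      AA u v N + ZZ X u v N ω := by
  rw [S_eq, AA, ZZ, tri, Finset.sum_filter, Fintype.sum_prod_type]
  rw [← Finset.sum_add_distrib]
  refine Finset.sum_congr rfl fun i _ => ?_
  rw [← Finset.sum_add_distrib]
  refine Finset.sum_congr rfl fun j _ => ?_
  by_cases h : j ≤ i
  · rw [if_pos h, if_pos h]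
    simp only [XM, aC, Matrix.of_apply]
    push_cast
    ring
  · rw [if_neg h, if_neg h]
    have h0 := hzero N i j (lt_of_not_ge h) ω
    simp [XM, h0]


lemma sq_sum_int_le {Ω : Type*} [MeasureSpace Ω] [IsProbabilityMeasure (ℙ : Measure Ω)]
    {ι : Type*} (s : Finset ι) (Y : ι → Ω → ℝ) (K : ℝ) (hK : 0 ≤ K)
    (hmeas : ∀ p ∈ s, Measurable (Y p))
    (hbdd : ∀ p ∈ s, ∀ ω, |Y p ω| ≤ K)
    (hmean : ∀ p ∈ s, ∫ ω, Y p ω = 0)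
    (hind : ∀ p ∈ s, ∀ q ∈ s, p ≠ q → IndepFun (Y p) (Y q) ℙ)
    (b : ι → ℝ) :
    ∫ ω, (∑ p ∈ s, b p * Y p ω) ^ 2 ≤ (∑ p ∈ s, (b p)^2) * K^2 := by
  have hYint : ∀ p ∈ s, Integrable (Y p) ℙ := fun p hp =>
    Integrable.mono' (integrable_const K) (hmeas p hp).aestronglyMeasurable
      (ae_of_all _ fun ω => by simpa [Real.norm_eq_abs] using hbdd p hp ω)
  have hprod : ∀ p ∈ s, ∀ q ∈ s, Integrable (fun ω => Y p ω * Y q ω) ℙ := by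
    intro p hp q hq
    refine Integrable.mono' (integrable_const (K*K))
      ((hmeas p hp).mul (hmeas q hq)).aestronglyMeasurable (ae_of_all _ fun ω => ?_)
    rw [Real.norm_eq_abs, abs_mul]
    exact mul_le_mul (hbdd p hp ω) (hbdd q hq ω) (abs_nonneg _) hK
  have hexp : ∀ ω : Ω, (∑ p ∈ s, b p * Y p ω)^2 =
      ∑ p ∈ s, ∑ q ∈ s, (b p * b q) * (Y p ω * Y q ω) := by
    intro ω
    rw [sq, Finset.sum_mul_sum]
    exact Finset.sum_congr rfl fun p _ => Finset.sum_congr rfl fun q _ => by ring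
  simp_rw [hexp]
  rw [integral_finset_sum s (fun p hp => integrable_finset_sum s
    (fun q hq => ((hprod p hp q hq).const_mul _)))]
  have hsplit : ∀ p ∈ s, ∫ ω, ∑ q ∈ s, (b p * b q) * (Y p ω * Y q ω) ∂ℙ =
      (b p * b p) * ∫ ω, Y p ω * Y p ω ∂ℙ := by
    intro p hp
    rw [integral_finset_sum s (fun q hq => ((hprod p hp q hq).const_mul _))]
    simp_rw [MeasureTheory.integral_const_mul]
    refine Finset.sum_eq_single_of_mem p hp fun q hq hqp => ?_
    have := (hind p hp q hq (Ne.symm hqp)).integral_mul_eq_mul_integral (hYint p hp).aestronglyMeasurable (hYint q hq).aestronglyMeasurable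
    rw [show (∫ (a : Ω), Y p a * Y q a ∂ℙ) = ∫ (a : Ω), (Y p * Y q) a ∂ℙ from rfl, this,
      hmean q hq, mul_zero, mul_zero]
  rw [show (∑ p ∈ s, ∫ ω, ∑ q ∈ s, (b p * b q) * (Y p ω * Y q ω) ∂ℙ)
      = ∑ p ∈ s, (b p * b p) * ∫ ω, Y p ω * Y p ω ∂ℙ from Finset.sum_congr rfl hsplit,
    Finset.sum_mul]
  refine Finset.sum_le_sum fun p hp => ?_
  have h1 : ∫ ω, Y p ω * Y p ω ∂ℙ ≤ K^2 := by
    calc ∫ ω, Y p ω * Y p ω ∂ℙ ≤ ∫ _ω, K^2 ∂ℙ := by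
          refine integral_mono (hprod p hp p hp) (integrable_const _) fun ω => ?_
          have := abs_le.mp (hbdd p hp ω)
          nlinarith
      _ = K^2 := by simp
  calc (b p * b p) * ∫ ω, Y p ω * Y p ω ∂ℙ ≤ (b p * b p) * K^2 :=
        mul_le_mul_of_nonneg_left h1 (mul_self_nonneg _)
    _ = b p ^ 2 * K^2 := by ring


lemma normSq_sum_int_le {Ω : Type*} [MeasureSpace Ω] [IsProbabilityMeasure (ℙ : Measure Ω)]
    {ι : Type*} (s : Finset ι) (Y : ι → Ω → ℝ) (K : ℝ) (hK : 0 ≤ K)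
    (hmeas : ∀ p ∈ s, Measurable (Y p))
    (hbdd : ∀ p ∈ s, ∀ ω, |Y p ω| ≤ K)
    (hmean : ∀ p ∈ s, ∫ ω, Y p ω = 0)
    (hind : ∀ p ∈ s, ∀ q ∈ s, p ≠ q → IndepFun (Y p) (Y q) ℙ)
    (a : ι → ℂ) :
    ∫ ω, ‖∑ p ∈ s, a p * ((Y p ω : ℝ) : ℂ)‖^2 ≤ (∑ p ∈ s, ‖a p‖^2) * K^2 := by
  have hre : ∀ ω, (∑ p ∈ s, a p * ((Y p ω : ℝ) : ℂ)).re = ∑ p ∈ s, (a p).re * Y p ω := by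
    intro ω
    rw [Complex.re_sum]
    exact Finset.sum_congr rfl fun p _ => by
      simp [Complex.mul_re]
  have him : ∀ ω, (∑ p ∈ s, a p * ((Y p ω : ℝ) : ℂ)).im = ∑ p ∈ s, (a p).im * Y p ω := by
    intro ω
    rw [Complex.im_sum]
    exact Finset.sum_congr rfl fun p _ => by
      simp [Complex.mul_im]
  have hpt : ∀ ω, ‖∑ p ∈ s, a p * ((Y p ω : ℝ) : ℂ)‖^2 =
      (∑ p ∈ s, (a p).re * Y p ω)^2 + (∑ p ∈ s, (a p).im * Y p ω)^2 := by
    intro ω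
    rw [Complex.sq_norm, Complex.normSq_apply, hre, him]
    ring
  have hint2 : ∀ (b : ι → ℝ), Integrable (fun ω => (∑ p ∈ s, b p * Y p ω)^2) ℙ := by
    intro b
    refine Integrable.mono' (integrable_const ((∑ p ∈ s, |b p| * K)^2))
      ((Finset.measurable_sum s fun p hp =>
        ((hmeas p hp).const_mul _)).pow_const 2).aestronglyMeasurable
      (ae_of_all _ fun ω => ?_)
    rw [Real.norm_eq_abs, abs_sq]
    have h1 : |∑ p ∈ s, b p * Y p ω| ≤ ∑ p ∈ s, |b p| * K := by
      refine le_trans (Finset.abs_sum_le_sum_abs _ _) (Finset.sum_le_sum fun p hp => ?_)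
      rw [abs_mul]
      exact mul_le_mul_of_nonneg_left (hbdd p hp ω) (abs_nonneg _)
    have h2 := abs_le.mp h1
    nlinarith [Finset.sum_nonneg (fun p (_ : p ∈ s) => mul_nonneg (abs_nonneg (b p)) hK)]
  calc ∫ ω, ‖∑ p ∈ s, a p * ((Y p ω : ℝ) : ℂ)‖^2
      = (∫ ω, (∑ p ∈ s, (a p).re * Y p ω)^2) + ∫ ω, (∑ p ∈ s, (a p).im * Y p ω)^2 := by
        simp_rw [hpt]
        exact integral_add (hint2 _) (hint2 _)
    _ ≤ (∑ p ∈ s, ((a p).re)^2) * K^2 + (∑ p ∈ s, ((a p).im)^2) * K^2 :=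
        add_le_add (sq_sum_int_le s Y K hK hmeas hbdd hmean hind _)
          (sq_sum_int_le s Y K hK hmeas hbdd hmean hind _)
    _ = (∑ p ∈ s, ‖a p‖^2) * K^2 := by
        rw [← add_mul, ← Finset.sum_add_distrib]
        congr 1
        refine Finset.sum_congr rfl fun p _ => ?_
        rw [Complex.sq_norm, Complex.normSq_apply]
        ring


lemma ZZ_moment {Ω : Type*} [MeasureSpace Ω] [IsProbabilityMeasure (ℙ : Measure Ω)]
    (X : (N : ℕ) → Fin N → Fin N → Ω → ℝ)
    (δ : ℕ → ℝ) (hδ : ∀ N, δ N ∈ Set.Ioc (0 : ℝ) 1)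
    (c : ℝ) (hc : 0 < c) (hlb : ∀ N, c ≤ δ N)
    (hmeas : ∀ N (i j : Fin N), Measurable (X N i j))
    (hindep : ∀ N, iIndepFun
      (fun p : LTri N => X N p.1.1 p.1.2) ℙ)
    (hvals : ∀ N (i j : Fin N), j ≤ i → ∀ ω, X N i j ω = (δ N)⁻¹ ∨ X N i j ω = 0)
    (hprob : ∀ N (i j : Fin N), j ≤ i →
      ℙ {ω | X N i j ω = (δ N)⁻¹} = ENNReal.ofReal (δ N))
    (u v : Lp ℂ 2 μ01) (N : ℕ) :
    ∫ ω, ‖ZZ X u v N ω‖^2 ≤ (c⁻¹^2 * (‖u‖^2 * ‖v‖^2)) / (N:ℝ)^2 := by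
  have hc1 : c ≤ 1 := (hlb 0).trans (hδ 0).2
  have hcinv : (1:ℝ) ≤ c⁻¹ := (one_le_inv_iff₀).mpr ⟨hc, hc1⟩
  have hδpos := fun N => (hδ N).1
  have hδ1 := fun N => (hδ N).2
  have hδinv1 : (1:ℝ) ≤ (δ N)⁻¹ := (one_le_inv_iff₀).mpr ⟨hδpos N, hδ1 N⟩
  have hδc : (δ N)⁻¹ ≤ c⁻¹ := inv_anti₀ hc (hlb N)
  set Y : Fin N × Fin N → Ω → ℝ := fun p ω => X N p.1 p.2 ω - 1 with hY
  have hmeasY : ∀ p ∈ tri N, Measurable (Y p) :=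
    fun p _ => (hmeas N p.1 p.2).sub measurable_const
  have hptri : ∀ p ∈ tri N, p.2 ≤ p.1 := fun p hp => (Finset.mem_filter.mp hp).2
  have hbddY : ∀ p ∈ tri N, ∀ ω, |Y p ω| ≤ c⁻¹ := by
    intro p hp ω
    rcases hvals N p.1 p.2 (hptri p hp) ω with h | h <;> rw [hY] <;> simp only [h] <;>
      rw [abs_le] <;> constructor <;> linarith
  have hmeanY : ∀ p ∈ tri N, ∫ ω, Y p ω = 0 := by
    intro p hp
    have hiX : Integrable (X N p.1 p.2) ℙ := by
      refine Integrable.mono' (integrable_const c⁻¹)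
        (hmeas N p.1 p.2).aestronglyMeasurable (ae_of_all _ fun ω => ?_)
      rw [Real.norm_eq_abs]
      rcases hvals N p.1 p.2 (hptri p hp) ω with h | h <;> rw [h, abs_le] <;>
        constructor <;> linarith
    have hXint : ∫ ω, X N p.1 p.2 ω = 1 := by
      have hXeq : ∀ ω, X N p.1 p.2 ω =
          Set.indicator {ω' | X N p.1 p.2 ω' = (δ N)⁻¹} (fun _ => (δ N)⁻¹) ω := by
        intro ω
        rcases hvals N p.1 p.2 (hptri p hp) ω with h | h
        · rw [h, Set.indicator_of_mem (by exact h)]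
        · rw [h, Set.indicator_of_notMem]
          simp only [Set.mem_setOf_eq, h]
          intro hcon
          exact absurd hcon.symm (by positivity)
      have hA : MeasurableSet {ω' | X N p.1 p.2 ω' = (δ N)⁻¹} :=
        hmeas N p.1 p.2 (measurableSet_singleton ((δ N)⁻¹))
      rw [(integral_congr_ae (ae_of_all _ hXeq) :
        (∫ ω, X N p.1 p.2 ω) = ∫ ω, Set.indicator {ω' | X N p.1 p.2 ω' = (δ N)⁻¹}
          (fun _ => (δ N)⁻¹) ω)]
      rw [MeasureTheory.integral_indicator_const _ hA, measureReal_def,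
        hprob N p.1 p.2 (hptri p hp), ENNReal.toReal_ofReal (hδpos N).le, smul_eq_mul,
        mul_inv_cancel₀ (hδpos N).ne']
    rw [hY]
    simp only
    rw [integral_sub hiX (integrable_const 1), hXint, integral_const]
    simp
  have hindY : ∀ p ∈ tri N, ∀ q ∈ tri N, p ≠ q → IndepFun (Y p) (Y q) ℙ := by
    intro p hp q hq hpq
    have hP : IndepFun (X N p.1 p.2) (X N q.1 q.2) ℙ := by
      exact (hindep N).indepFun (i := ⟨p, hptri p hp⟩) (j := ⟨q, hptri q hq⟩)
        (fun h => hpq (congrArg Subtype.val h))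
    exact hP.comp (measurable_id.sub measurable_const) (measurable_id.sub measurable_const)
  have hmain := normSq_sum_int_le (tri N) Y c⁻¹ (by positivity) hmeasY hbddY hmeanY hindY
    (aC u v N)
  have hZeq : ∀ ω, ZZ X u v N ω = ∑ p ∈ tri N, aC u v N p * ((Y p ω : ℝ) : ℂ) := fun ω => rfl
  have hcoef : ∑ p ∈ tri N, ‖aC u v N p‖^2 ≤ ((N:ℝ)⁻¹)^2 * (‖u‖^2 * ‖v‖^2) := by
    calc ∑ p ∈ tri N, ‖aC u v N p‖^2
        ≤ ∑ p : Fin N × Fin N, ‖aC u v N p‖^2 :=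
          Finset.sum_le_sum_of_subset_of_nonneg (Finset.subset_univ _)
            (fun p _ _ => by positivity)
      _ = ((N:ℝ)⁻¹)^2 * ((∑ j : Fin N, ‖cf N j u‖^2) * (∑ i : Fin N, ‖cf N i v‖^2)) := by
          have hprodsum : ∀ (K : ℝ) (f g : Fin N → ℝ),
              (∑ i : Fin N, ∑ j : Fin N, K * f j * g i) =
                K * ((∑ j : Fin N, f j) * (∑ i : Fin N, g i)) := by
            intro K f g
            rw [Finset.sum_mul_sum, Finset.mul_sum, Finset.sum_comm]
            refine Finset.sum_congr rfl fun j _ => ?_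
            rw [Finset.mul_sum]
            exact Finset.sum_congr rfl fun i _ => by ring
          have hterm : ∀ (i j : Fin N), ‖aC u v N (i,j)‖^2 =
              ((N:ℝ)⁻¹)^2 * ‖cf N j u‖^2 * ‖cf N i v‖^2 := by
            intro i j
            rw [aC, norm_mul, norm_mul, RCLike.norm_conj, norm_inv, Complex.norm_natCast]
            ring
          rw [Fintype.sum_prod_type]
          simp_rw [hterm]
          exact hprodsum _ _ _
      _ ≤ ((N:ℝ)⁻¹)^2 * (‖u‖^2 * ‖v‖^2) := by
          have h1 := bessel N u
          have h2 := bessel N v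
          have h1' : (0:ℝ) ≤ ∑ j : Fin N, ‖cf N j u‖^2 :=
            Finset.sum_nonneg fun _ _ => by positivity
          have h2' : (0:ℝ) ≤ ∑ i : Fin N, ‖cf N i v‖^2 :=
            Finset.sum_nonneg fun _ _ => by positivity
          have : (∑ j : Fin N, ‖cf N j u‖^2) * (∑ i : Fin N, ‖cf N i v‖^2)
              ≤ ‖u‖^2 * ‖v‖^2 := mul_le_mul h1 h2 h2' (by positivity)
          exact mul_le_mul_of_nonneg_left this (by positivity)
  calc ∫ ω, ‖ZZ X u v N ω‖^2 = ∫ ω, ‖∑ p ∈ tri N, aC u v N p * ((Y p ω : ℝ) : ℂ)‖^2 := by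
        simp_rw [hZeq]
    _ ≤ (∑ p ∈ tri N, ‖aC u v N p‖^2) * (c⁻¹)^2 := hmain
    _ ≤ (((N:ℝ)⁻¹)^2 * (‖u‖^2 * ‖v‖^2)) * (c⁻¹)^2 :=
        mul_le_mul_of_nonneg_right hcoef (by positivity)
    _ = (c⁻¹^2 * (‖u‖^2 * ‖v‖^2)) / (N:ℝ)^2 := by
        rw [div_eq_mul_inv, ← inv_pow]
        ring


lemma ZZ_as_tendsto {Ω : Type*} [MeasureSpace Ω] [IsProbabilityMeasure (ℙ : Measure Ω)]
    (X : (N : ℕ) → Fin N → Fin N → Ω → ℝ)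
    (δ : ℕ → ℝ) (hδ : ∀ N, δ N ∈ Set.Ioc (0 : ℝ) 1)
    (c : ℝ) (hc : 0 < c) (hlb : ∀ N, c ≤ δ N)
    (hmeas : ∀ N (i j : Fin N), Measurable (X N i j))
    (hindep : ∀ N, iIndepFun
      (fun p : LTri N => X N p.1.1 p.1.2) ℙ)
    (hvals : ∀ N (i j : Fin N), j ≤ i → ∀ ω, X N i j ω = (δ N)⁻¹ ∨ X N i j ω = 0)
    (hprob : ∀ N (i j : Fin N), j ≤ i →
      ℙ {ω | X N i j ω = (δ N)⁻¹} = ENNReal.ofReal (δ N))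
    (u v : Lp ℂ 2 μ01) :
    ∀ᵐ ω ∂ℙ, Tendsto (fun N => ZZ X u v N ω) atTop (nhds 0) := by
  set C : ℝ := c⁻¹^2 * (‖u‖^2 * ‖v‖^2) with hCdef
  have hC : 0 ≤ C := by positivity
  have hZmeas : ∀ N, Measurable (fun ω => ZZ X u v N ω) := by
    intro N
    apply Finset.measurable_sum
    intro p _
    exact (Complex.measurable_ofReal.comp
      ((hmeas N p.1 p.2).sub measurable_const)).const_mul _
  have hZbdd : ∀ N, ∃ B : ℝ, ∀ ω, ‖ZZ X u v N ω‖^2 ≤ B := by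
    intro N
    have hc1 : c ≤ 1 := (hlb 0).trans (hδ 0).2
    have hcinv : (1:ℝ) ≤ c⁻¹ := (one_le_inv_iff₀).mpr ⟨hc, hc1⟩
    refine ⟨(∑ p ∈ tri N, ‖aC u v N p‖ * (c⁻¹ + 1))^2, fun ω => ?_⟩
    have h1 : ‖ZZ X u v N ω‖ ≤ ∑ p ∈ tri N, ‖aC u v N p‖ * (c⁻¹ + 1) := by
      rw [ZZ]
      refine le_trans (norm_sum_le _ _) (Finset.sum_le_sum fun p hp => ?_)
      rw [norm_mul]
      refine mul_le_mul_of_nonneg_left ?_ (norm_nonneg _)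
      rw [Complex.norm_real, Real.norm_eq_abs]
      have hptri : p.2 ≤ p.1 := (Finset.mem_filter.mp hp).2
      have hδpos := (hδ N).1
      have hδ1 := (hδ N).2
      have hδinv1 : (1:ℝ) ≤ (δ N)⁻¹ := (one_le_inv_iff₀).mpr ⟨hδpos, hδ1⟩
      have hδc : (δ N)⁻¹ ≤ c⁻¹ := inv_anti₀ hc (hlb N)
      rcases hvals N p.1 p.2 hptri ω with h | h <;> rw [h, abs_le] <;>
        constructor <;> linarith
    have h0 : (0:ℝ) ≤ ∑ p ∈ tri N, ‖aC u v N p‖ * (c⁻¹ + 1) :=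
      le_trans (norm_nonneg _) h1
    nlinarith [norm_nonneg (ZZ X u v N ω)]
  have hint : ∀ N, Integrable (fun ω => ‖ZZ X u v N ω‖^2) ℙ := by
    intro N
    obtain ⟨B, hB⟩ := hZbdd N
    refine Integrable.mono' (integrable_const B)
      (((hZmeas N).norm.pow_const 2).aestronglyMeasurable) (ae_of_all _ fun ω => ?_)
    rw [Real.norm_eq_abs, abs_sq]
    exact hB ω
  set F : ℕ → Ω → ℝ≥0∞ := fun N ω => ENNReal.ofReal (‖ZZ X u v N ω‖^2) with hFdef
  have hFmeas : ∀ N, Measurable (F N) := fun N =>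
    ENNReal.measurable_ofReal.comp ((hZmeas N).norm.pow_const 2)
  have h1 : ∀ N, ∫⁻ ω, F N ω ∂ℙ ≤ ENNReal.ofReal (C / (N:ℝ)^2) := by
    intro N
    rw [hFdef]
    rw [← ofReal_integral_eq_lintegral_ofReal (hint N) (ae_of_all _ fun ω => sq_nonneg _)]
    exact ENNReal.ofReal_le_ofReal
      (ZZ_moment X δ hδ c hc hlb hmeas hindep hvals hprob u v N)
  have hsum : Summable (fun N : ℕ => C / (N:ℝ)^2) := by
    have h := Real.summable_one_div_nat_pow.mpr (by norm_num : 1 < 2)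
    have := h.mul_left C
    refine this.congr fun N => ?_
    field_simp
  have h3 : ∑' N : ℕ, ENNReal.ofReal (C / (N:ℝ)^2) < ⊤ := by
    rw [← ENNReal.ofReal_tsum_of_nonneg (fun N => by positivity) hsum]
    exact ENNReal.ofReal_lt_top
  have h4 : ∫⁻ ω, ∑' N, F N ω ∂ℙ < ⊤ := by
    rw [lintegral_tsum (fun N => (hFmeas N).aemeasurable)]
    exact lt_of_le_of_lt (ENNReal.tsum_le_tsum h1) h3
  have h5 : ∀ᵐ ω ∂ℙ, ∑' N, F N ω < ⊤ :=
    ae_lt_top' (Measurable.aemeasurable (Measurable.ennreal_tsum hFmeas)) h4.ne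
  filter_upwards [h5] with ω hω
  have htend : Tendsto (fun N => F N ω) atTop (nhds 0) :=
    ENNReal.tendsto_atTop_zero_of_tsum_ne_top hω.ne
  have h6 : Tendsto (fun N => ‖ZZ X u v N ω‖^2) atTop (nhds 0) := by
    have h6' := (ENNReal.tendsto_toReal (ENNReal.zero_ne_top)).comp htend
    simp only [Function.comp_def, ENNReal.toReal_zero, hFdef] at h6'
    refine h6'.congr fun N => ?_
    rw [ENNReal.toReal_ofReal (sq_nonneg _)]
  have h7 : Tendsto (fun N => ‖ZZ X u v N ω‖) atTop (nhds 0) := by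
    have := (Real.continuous_sqrt.tendsto 0).comp h6
    simp only [Function.comp_def, Real.sqrt_zero] at this
    refine this.congr fun N => ?_
    rw [Real.sqrt_sq (norm_nonneg _)]
  exact tendsto_zero_iff_norm_tendsto_zero.mpr h7


lemma mu01_univ : μ01 Set.univ = 1 := by
  rw [μ01, Measure.restrict_apply_univ]
  simp [Real.volume_Icc]

lemma integrable_L2 (f : Lp ℂ 2 μ01) : Integrable (f : ℝ → ℂ) μ01 :=
  (Lp.memLp f).integrable one_le_two

lemma setInt_norm_le (f : Lp ℂ 2 μ01) {s : Set ℝ} (hs : MeasurableSet s) :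
    ‖∫ x in s, (f : ℝ → ℂ) x ∂μ01‖ ≤ Real.sqrt ((μ01 s).toReal) * ‖f‖ := by
  rw [← L2.inner_indicatorConstLp_one (𝕜 := ℂ) hs (measure_ne_top μ01 s) f]
  refine le_trans (norm_inner_le_norm _ _) ?_
  rw [norm_indicatorConstLp two_ne_zero ENNReal.ofNat_ne_top]
  rw [Real.sqrt_eq_rpow]
  simp [ENNReal.toReal_ofNat, measureReal_def]

/-- the primitive of `f` with respect to `μ01` -/
def primI (f : Lp ℂ 2 μ01) (x : ℝ) : ℂ := ∫ t in Set.Ioc (0:ℝ) x, (f : ℝ → ℂ) t ∂μ01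

lemma primI_bound (f : Lp ℂ 2 μ01) (x : ℝ) : ‖primI f x‖ ≤ ‖f‖ := by
  refine le_trans (setInt_norm_le f measurableSet_Ioc) ?_
  have h1 : (μ01 (Set.Ioc 0 x)).toReal ≤ 1 := by
    have := measure_mono (Set.subset_univ (Set.Ioc (0:ℝ) x)) (μ := μ01)
    rw [mu01_univ] at this
    exact le_trans (ENNReal.toReal_mono ENNReal.one_ne_top this) (by norm_num)
  have h2 : Real.sqrt ((μ01 (Set.Ioc 0 x)).toReal) ≤ 1 := by
    rw [show (1:ℝ) = Real.sqrt 1 by simp]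
    exact Real.sqrt_le_sqrt h1
  nlinarith [norm_nonneg f, Real.sqrt_nonneg ((μ01 (Set.Ioc 0 x)).toReal)]

lemma primI_diff (f : Lp ℂ 2 μ01) {x b : ℝ} (h0 : 0 ≤ x) (hxb : x ≤ b) :
    primI f b - primI f x = ∫ t in Set.Ioc x b, (f : ℝ → ℂ) t ∂μ01 := by
  rw [primI, primI, ← Set.Ioc_union_Ioc_eq_Ioc h0 hxb,
    setIntegral_union (Set.Ioc_disjoint_Ioc_of_le le_rfl) measurableSet_Ioc
      (integrable_L2 f).integrableOn (integrable_L2 f).integrableOn]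
  ring

lemma primI_diff_bound (f : Lp ℂ 2 μ01) {x b : ℝ} (h0 : 0 ≤ x) (hxb : x ≤ b) :
    ‖primI f b - primI f x‖ ≤ Real.sqrt (b - x) * ‖f‖ := by
  rw [primI_diff f h0 hxb]
  refine le_trans (setInt_norm_le f measurableSet_Ioc) ?_
  have h1 : (μ01 (Set.Ioc x b)).toReal ≤ b - x := by
    have h2 : μ01 (Set.Ioc x b) ≤ ENNReal.ofReal (b - x) := by
      refine le_trans (mu01_le_volume _) ?_
      rw [Real.volume_Ioc]
    exact ENNReal.toReal_le_of_le_ofReal (by linarith) h2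
  exact mul_le_mul_of_nonneg_right (Real.sqrt_le_sqrt h1) (norm_nonneg f)

lemma primI_continuousOn (f : Lp ℂ 2 μ01) :
    ContinuousOn (primI f) (Set.Icc (0:ℝ) 1) :=
  intervalIntegral.continuousOn_primitive (μ := μ01) (integrable_L2 f).integrableOn

lemma sum_pieces {E : Type*} [NormedAddCommGroup E] [NormedSpace ℝ E]
    (g : ℝ → E) (hg : Integrable g μ01) (N : ℕ) : ∀ (n : ℕ),
    ∫ x in Set.Ioc (0:ℝ) ((n:ℝ)/N), g x ∂μ01 =
      ∑ k ∈ Finset.range n, ∫ x in Set.Ioc ((k:ℝ)/N) (((k:ℝ)+1)/N), g x ∂μ01 := by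
  intro n
  induction n with
  | zero => simp
  | succ n ih =>
    rcases Nat.eq_zero_or_pos N with hN | hN
    · subst hN
      simp only [Nat.cast_zero, div_zero, Set.Ioc_self] at *
      rw [Finset.sum_range_succ, ← ih]
      simp
    · have hNpos : (0:ℝ) < N := by exact_mod_cast hN
      have h1 : (0:ℝ) ≤ (n:ℝ)/N := by positivity
      have h2 : (n:ℝ)/N ≤ ((n:ℝ)+1)/N := by gcongr <;> linarith
      rw [Finset.sum_range_succ, ← ih, Nat.cast_succ,
        ← Set.Ioc_union_Ioc_eq_Ioc h1 h2,
        setIntegral_union (Set.Ioc_disjoint_Ioc_of_le le_rfl) measurableSet_Ioc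
          hg.integrableOn hg.integrableOn]


lemma AA_tendsto (u v : Lp ℂ 2 μ01) (V : Lp ℂ 2 μ01 → Lp ℂ 2 μ01)
    (hV : ∀ᵐ x ∂μ01, (V u : ℝ → ℂ) x = ∫ t in (0:ℝ)..x, (u : ℝ → ℂ) t) :
    Tendsto (AA u v) atTop (nhds (@inner ℂ _ _ v (V u))) := by
  have hIu := integrable_L2 u
  have hIv := integrable_L2 v
  have hIcv : Integrable (fun x => (starRingEnd ℂ) ((v : ℝ → ℂ) x)) μ01 := by
    refine Integrable.mono' hIv.norm
      (Complex.continuous_conj.comp_aestronglyMeasurable (Lp.aestronglyMeasurable v))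
      (ae_of_all _ fun x => by simp)
  have hUmeas : AEStronglyMeasurable (primI u) μ01 :=
    (primI_continuousOn u).aestronglyMeasurable measurableSet_Icc
  have hg : Integrable (fun x => (starRingEnd ℂ) ((v : ℝ → ℂ) x) * primI u x) μ01 := by
    have h1 : Integrable (fun x => primI u x * (starRingEnd ℂ) ((v : ℝ → ℂ) x)) μ01 :=
      Integrable.bdd_mul hIcv hUmeas (ae_of_all _ fun x => primI_bound u x)
    exact h1.congr (ae_of_all _ fun x => by ring)
  -- the inner product as an integral against the primitive
  have hT : (@inner ℂ _ _ v (V u)) =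
      ∫ x, (starRingEnd ℂ) ((v : ℝ → ℂ) x) * primI u x ∂μ01 := by
    rw [L2.inner_def]
    refine integral_congr_ae ?_
    have h2 : ∀ᵐ x ∂μ01, x ∈ Set.Icc (0:ℝ) 1 :=
      ae_restrict_mem measurableSet_Icc
    filter_upwards [hV, h2] with x hx hmem
    rw [RCLike.inner_apply', hx]
    congr 1
    rw [intervalIntegral.integral_of_le hmem.1, primI]
    unfold μ01
    rw [Measure.restrict_restrict measurableSet_Ioc,
      Set.inter_eq_left.mpr (Set.Ioc_subset_Icc_self.trans
        (Set.Icc_subset_Icc_right hmem.2))]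
  -- key identity for `AA`
  have key : ∀ N : ℕ, AA u v N = ∑ i : Fin N,
      ∫ x in Set.Ioc ((i:ℝ)/N) (((i:ℝ)+1)/N),
        (starRingEnd ℂ) ((v : ℝ → ℂ) x) * primI u (((i:ℝ)+1)/N) ∂μ01 := by
    intro N
    rw [AA]
    refine Finset.sum_congr rfl fun i _ => ?_
    have hN : (0:ℝ) < N := by exact_mod_cast i.pos
    set Ju : ℕ → ℂ :=
      fun k => ∫ t in Set.Ioc ((k:ℝ)/N) (((k:ℝ)+1)/N), (u : ℝ → ℂ) t ∂μ01 with hJu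
    set Kv : ℂ :=
      ∫ x in Set.Ioc ((i:ℝ)/N) (((i:ℝ)+1)/N), (starRingEnd ℂ) ((v : ℝ → ℂ) x) ∂μ01
      with hKv
    have hcf : ∀ j : Fin N, cf N j u = (Real.sqrt N : ℂ) * Ju (j:ℕ) := by
      intro j
      rw [cf_eq, integral_Icc_eq_integral_Ioc]
    have hKveq : (starRingEnd ℂ) (cf N i v) = (Real.sqrt N : ℂ) * Kv := by
      rw [cf_eq, integral_Icc_eq_integral_Ioc, map_mul, Complex.conj_ofReal, hKv,
        ← integral_conj]
    have step1 : (∑ j : Fin N,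
        (if j ≤ i then (N:ℂ)⁻¹ else 0) * cf N j u * (starRingEnd ℂ) (cf N i v)) =
        ∑ k ∈ Finset.range N, (if k ≤ (i:ℕ) then
          (N:ℂ)⁻¹ * ((Real.sqrt N : ℂ) * Ju k) * ((Real.sqrt N : ℂ) * Kv) else 0) := by
      rw [← Fin.sum_univ_eq_sum_range]
      refine Finset.sum_congr rfl fun j _ => ?_
      by_cases h : j ≤ i
      · rw [if_pos h, if_pos (Fin.le_def.mp h), hcf j, hKveq]
      · rw [if_neg h, if_neg (fun hc => h (Fin.le_def.mpr hc)), zero_mul, zero_mul]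
    have step2 : (∑ k ∈ Finset.range N, (if k ≤ (i:ℕ) then
          (N:ℂ)⁻¹ * ((Real.sqrt N : ℂ) * Ju k) * ((Real.sqrt N : ℂ) * Kv) else 0)) =
        ∑ k ∈ Finset.range ((i:ℕ)+1),
          (N:ℂ)⁻¹ * ((Real.sqrt N : ℂ) * Ju k) * ((Real.sqrt N : ℂ) * Kv) := by
      rw [← Finset.sum_filter]
      congr 1
      ext k
      simp only [Finset.mem_filter, Finset.mem_range, Nat.lt_succ_iff]
      exact ⟨fun h => h.2, fun h => ⟨lt_of_le_of_lt h i.isLt, h⟩⟩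
    have hsqrt : (N:ℂ)⁻¹ * (Real.sqrt N : ℂ) * (Real.sqrt N : ℂ) = 1 := by
      rw [mul_assoc, ← Complex.ofReal_mul, Real.mul_self_sqrt hN.le,
        (by norm_cast : ((N:ℝ) : ℂ) = (N:ℂ)), inv_mul_cancel₀ (by exact_mod_cast hN.ne')]
    have hprim : ∑ k ∈ Finset.range ((i:ℕ)+1), Ju k = primI u (((i:ℝ)+1)/N) := by
      simp only [hJu, primI]
      rw [← sum_pieces (u : ℝ → ℂ) hIu N ((i:ℕ)+1)]
      norm_num
    calc (∑ j : Fin N,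
        (if j ≤ i then (N:ℂ)⁻¹ else 0) * cf N j u * (starRingEnd ℂ) (cf N i v))
        = ∑ k ∈ Finset.range ((i:ℕ)+1),
          (N:ℂ)⁻¹ * ((Real.sqrt N : ℂ) * Ju k) * ((Real.sqrt N : ℂ) * Kv) := by
          rw [step1, step2]
      _ = ((N:ℂ)⁻¹ * (Real.sqrt N : ℂ) * (Real.sqrt N : ℂ)) *
            ((∑ k ∈ Finset.range ((i:ℕ)+1), Ju k) * Kv) := by
          rw [← Finset.sum_mul]
          simp_rw [← mul_assoc]
          rw [← Finset.mul_sum]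
          ring
      _ = primI u (((i:ℝ)+1)/N) * Kv := by rw [hsqrt, hprim, one_mul]
      _ = ∫ x in Set.Ioc ((i:ℝ)/N) (((i:ℝ)+1)/N),
            (starRingEnd ℂ) ((v : ℝ → ℂ) x) * primI u (((i:ℝ)+1)/N) ∂μ01 := by
          rw [hKv, ← MeasureTheory.integral_const_mul]
          exact integral_congr_ae (ae_of_all _ fun x => by ring)
  -- splitting the target integral
  have hcompl : μ01 ((Set.Ioc (0:ℝ) 1)ᶜ) = 0 := by
    have hsub : (Set.Ioc (0:ℝ) 1)ᶜ ∩ Set.Icc (0:ℝ) 1 ⊆ {0} := by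
      intro x hx
      simp only [Set.mem_inter_iff, Set.mem_compl_iff, Set.mem_Ioc, Set.mem_Icc,
        not_and, not_le] at hx
      rcases hx with ⟨h1, h2, h3⟩
      rcases eq_or_lt_of_le h2 with h | h
      · simp [← h]
      · exact absurd (h1 h) (not_lt.mpr h3)
    rw [μ01, Measure.restrict_apply (measurableSet_Ioc.compl)]
    exact measure_mono_null hsub (by simp)
  have hTsplit : ∀ N : ℕ, 1 ≤ N →
      (∫ x, (starRingEnd ℂ) ((v : ℝ → ℂ) x) * primI u x ∂μ01) = ∑ i : Fin N,
        ∫ x in Set.Ioc ((i:ℝ)/N) (((i:ℝ)+1)/N),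
          (starRingEnd ℂ) ((v : ℝ → ℂ) x) * primI u x ∂μ01 := by
    intro N hN1
    have hNpos : (0:ℝ) < N := by exact_mod_cast hN1
    have h1 : (∫ x, (starRingEnd ℂ) ((v : ℝ → ℂ) x) * primI u x ∂μ01) =
        ∫ x in Set.Ioc (0:ℝ) 1, (starRingEnd ℂ) ((v : ℝ → ℂ) x) * primI u x ∂μ01 := by
      rw [← integral_add_compl (measurableSet_Ioc : MeasurableSet (Set.Ioc (0:ℝ) 1)) hg]
      rw [show (∫ x in (Set.Ioc (0:ℝ) 1)ᶜ,
          (starRingEnd ℂ) ((v : ℝ → ℂ) x) * primI u x ∂μ01) = 0 from by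
        rw [Measure.restrict_eq_zero.mpr hcompl, integral_zero_measure], add_zero]
    have hsp := sum_pieces _ hg N N
    rw [div_self hNpos.ne'] at hsp
    rw [h1, hsp, ← Fin.sum_univ_eq_sum_range (fun k : ℕ =>
        ∫ x in Set.Ioc ((k:ℝ)/N) (((k:ℝ)+1)/N),
          (starRingEnd ℂ) ((v : ℝ → ℂ) x) * primI u x ∂μ01) N]
  -- the quantitative estimate
  set Cv : ℝ := ∫ x, ‖(v : ℝ → ℂ) x‖ ∂μ01 with hCv
  have hCv0 : 0 ≤ Cv := integral_nonneg fun x => norm_nonneg _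
  have hest : ∀ N : ℕ, 1 ≤ N →
      ‖AA u v N - @inner ℂ _ _ v (V u)‖ ≤ Real.sqrt (1/(N:ℝ)) * ‖u‖ * Cv := by
    intro N hN1
    have hNpos : (0:ℝ) < N := by exact_mod_cast hN1
    rw [key N, hT, hTsplit N hN1, ← Finset.sum_sub_distrib]
    refine le_trans (norm_sum_le _ _) ?_
    have hpiece : ∀ i : Fin N,
        ‖(∫ x in Set.Ioc ((i:ℝ)/N) (((i:ℝ)+1)/N),
            (starRingEnd ℂ) ((v : ℝ → ℂ) x) * primI u (((i:ℝ)+1)/N) ∂μ01) -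
          ∫ x in Set.Ioc ((i:ℝ)/N) (((i:ℝ)+1)/N),
            (starRingEnd ℂ) ((v : ℝ → ℂ) x) * primI u x ∂μ01‖ ≤
        ∫ x in Set.Ioc ((i:ℝ)/N) (((i:ℝ)+1)/N),
          ‖(v : ℝ → ℂ) x‖ * (Real.sqrt (1/(N:ℝ)) * ‖u‖) ∂μ01 := by
      intro i
      have hi1 : ((i:ℝ)+1)/N ≤ 1 := by
        rw [div_le_one hNpos]
        have : (i:ℝ) + 1 ≤ N := by exact_mod_cast i.isLt
        linarith
      have hint1 : IntegrableOn (fun x =>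
          (starRingEnd ℂ) ((v : ℝ → ℂ) x) * primI u (((i:ℝ)+1)/N))
          (Set.Ioc ((i:ℝ)/N) (((i:ℝ)+1)/N)) μ01 :=
        (hIcv.mul_const _).integrableOn
      have hint2 : IntegrableOn (fun x =>
          (starRingEnd ℂ) ((v : ℝ → ℂ) x) * primI u x)
          (Set.Ioc ((i:ℝ)/N) (((i:ℝ)+1)/N)) μ01 := hg.integrableOn
      rw [← integral_sub hint1 hint2]
      refine le_trans (norm_integral_le_integral_norm _) ?_
      refine setIntegral_mono_on (hint1.sub hint2).norm
        ((hIv.norm.mul_const _).integrableOn) measurableSet_Ioc fun x hx => ?_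
      have hx0 : (0:ℝ) ≤ x := le_trans (by positivity) hx.1.le
      have hxb : x ≤ ((i:ℝ)+1)/N := hx.2
      have hdiff : ((i:ℝ)+1)/N - x ≤ 1/N := by
        have h5 : ((i:ℝ)+1)/N - (i:ℝ)/N = 1/N := by
          rw [div_sub_div_same]
          ring_nf
        have := hx.1
        linarith
      calc ‖(starRingEnd ℂ) ((v : ℝ → ℂ) x) * primI u (((i:ℝ)+1)/N) -
            (starRingEnd ℂ) ((v : ℝ → ℂ) x) * primI u x‖
          = ‖(v : ℝ → ℂ) x‖ * ‖primI u (((i:ℝ)+1)/N) - primI u x‖ := by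
            rw [← mul_sub, norm_mul, RCLike.norm_conj]
        _ ≤ ‖(v : ℝ → ℂ) x‖ * (Real.sqrt (1/(N:ℝ)) * ‖u‖) := by
            refine mul_le_mul_of_nonneg_left ?_ (norm_nonneg _)
            refine le_trans (primI_diff_bound u hx0 hxb) ?_
            exact mul_le_mul_of_nonneg_right
              (Real.sqrt_le_sqrt (by linarith)) (norm_nonneg u)
    refine le_trans (Finset.sum_le_sum fun i _ => hpiece i) ?_
    have hsum2 : ∑ i : Fin N, (∫ x in Set.Ioc ((i:ℝ)/N) (((i:ℝ)+1)/N),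
        ‖(v : ℝ → ℂ) x‖ * (Real.sqrt (1/(N:ℝ)) * ‖u‖) ∂μ01) =
        (∫ x in Set.Ioc (0:ℝ) 1, ‖(v : ℝ → ℂ) x‖ ∂μ01) *
          (Real.sqrt (1/(N:ℝ)) * ‖u‖) := by
      have hsp := sum_pieces _ hIv.norm N N
      rw [div_self hNpos.ne'] at hsp
      rw [hsp, ← Fin.sum_univ_eq_sum_range (fun k : ℕ =>
          ∫ x in Set.Ioc ((k:ℝ)/N) (((k:ℝ)+1)/N), ‖(v : ℝ → ℂ) x‖ ∂μ01) N,
        Finset.sum_mul]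
      exact Finset.sum_congr rfl fun k _ => MeasureTheory.integral_mul_const _ _
    rw [hsum2]
    have hle : (∫ x in Set.Ioc (0:ℝ) 1, ‖(v : ℝ → ℂ) x‖ ∂μ01) ≤ Cv :=
      setIntegral_le_integral hIv.norm (ae_of_all _ fun x => norm_nonneg _)
    have h6 : 0 ≤ Real.sqrt (1/(N:ℝ)) * ‖u‖ := by positivity
    calc (∫ x in Set.Ioc (0:ℝ) 1, ‖(v : ℝ → ℂ) x‖ ∂μ01) *
          (Real.sqrt (1/(N:ℝ)) * ‖u‖)
        ≤ Cv * (Real.sqrt (1/(N:ℝ)) * ‖u‖) := mul_le_mul_of_nonneg_right hle h6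
      _ = Real.sqrt (1/(N:ℝ)) * ‖u‖ * Cv := by ring
  -- conclude
  rw [← tendsto_sub_nhds_zero_iff]
  have hev : ∀ᶠ N in atTop, ‖AA u v N - @inner ℂ _ _ v (V u)‖ ≤
      Real.sqrt (1/(N:ℝ)) * ‖u‖ * Cv := by
    filter_upwards [eventually_ge_atTop 1] with N hN
    exact hest N hN
  have h0 : Tendsto (fun N : ℕ => Real.sqrt (1/(N:ℝ))) atTop (nhds 0) := by
    have := (Real.continuous_sqrt.tendsto' 0 0 (by simp)).comp
      tendsto_one_div_atTop_nhds_zero_nat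
    exact this
  have hlim : Tendsto (fun N : ℕ => Real.sqrt (1/(N:ℝ)) * ‖u‖ * Cv) atTop (nhds 0) := by
    have := (h0.mul_const ‖u‖).mul_const Cv
    simpa using this
  exact squeeze_zero_norm' hev hlim

end SBAux

/-- **Sparse Bernoulli example, bounded-below case.** Let the (unscaled)
lower-triangular entries `X_{i,j}^N` be i.i.d., equal to `1/δ(N)` with
probability `δ(N)` and `0` otherwise (so the entries of `X_N = (1/N)(X_{i,j}^N)`
equal `1/(δ(N)N)` with probability `δ(N)`; the mean is `μ_N = 1` and the
variance is `σ_N² = (1-δ(N))/δ(N)`). If `δ(N)` is bounded below by a positive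
constant, then for all `u, v ∈ L²[0,1]`, almost surely
`⟨W_N X_N W_N^*(u), v⟩ → ⟨V(u), v⟩`. -/
theorem wot_like_convergence_sparse_bernoulli
    {Ω : Type*} [MeasureSpace Ω] [IsProbabilityMeasure (ℙ : Measure Ω)]
    (X : (N : ℕ) → Fin N → Fin N → Ω → ℝ)
    (δ : ℕ → ℝ) (hδ : ∀ N, δ N ∈ Set.Ioc (0 : ℝ) 1)
    (c : ℝ) (hc : 0 < c) (hlb : ∀ N, c ≤ δ N)
    (hmeas : ∀ N (i j : Fin N), Measurable (X N i j))
    (hzero : ∀ N (i j : Fin N), i < j → ∀ ω, X N i j ω = 0)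
    (hindep : ∀ N, iIndepFun
      (fun p : LTri N => X N p.1.1 p.1.2) ℙ)
    (hvals : ∀ N (i j : Fin N), j ≤ i → ∀ ω, X N i j ω = (δ N)⁻¹ ∨ X N i j ω = 0)
    (hprob : ∀ N (i j : Fin N), j ≤ i →
      ℙ {ω | X N i j ω = (δ N)⁻¹} = ENNReal.ofReal (δ N))
    (V : Lp ℂ 2 μ01 → Lp ℂ 2 μ01) (hV : IsVolterra V)
    (u v : Lp ℂ 2 μ01) :
    ∀ᵐ ω ∂ℙ, Tendsto
      (fun N => (@inner ℂ _ _ v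
        (Wmap N (matVec (XM N (X N) ω) (Wstar N u))) : ℂ))
      atTop (nhds (@inner ℂ _ _ v (V u))) := by
  have hdet := SBAux.AA_tendsto u v V (hV u)
  have hZ := SBAux.ZZ_as_tendsto X δ hδ c hc hlb hmeas hindep hvals hprob u v
  filter_upwards [hZ] with ω hω
  have hfun : ∀ N : ℕ, (@inner ℂ _ _ v
      (Wmap N (matVec (XM N (X N) ω) (Wstar N u))) : ℂ) =
      SBAux.AA u v N + SBAux.ZZ X u v N ω :=
    fun N => SBAux.S_decomp X hzero u v N ω
  have hsum := hdet.add hω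
  rw [add_zero] at hsum
  exact Tendsto.congr (fun N => (hfun N).symm) hsum


end
end

section
/- Suppose the entries $X_{i,j}^N$ for $1 \le j \le i \le N$ are i.i.d. random variables, whose common distribution does not depend on $N$ and has finite moments of all orders. Then for every $n \ge 1$, $E\big[\mathrm{tr}\big((X_N^* X_N)^n\big)\big] \to 0$ as $N \to \infty$, where $\mathrm{tr} = \frac{1}{N}\mathrm{Tr}$ is the normalized trace. -/
open MeasureTheory ProbabilityTheory Filter Matrix

noncomputable section

namespace TraceAux

variable {N : ℕ}

def Fsq {N : ℕ} (A : Matrix (Fin N) (Fin N) ℝ) : ℝ := ∑ i, ∑ j, A i j ^ 2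

lemma Fsq_nonneg (A : Matrix (Fin N) (Fin N) ℝ) : 0 ≤ Fsq A :=
  Finset.sum_nonneg fun _ _ => Finset.sum_nonneg fun _ _ => sq_nonneg _

lemma Fsq_transpose (A : Matrix (Fin N) (Fin N) ℝ) : Fsq Aᵀ = Fsq A := by
  rw [Fsq, Fsq, Finset.sum_comm]; rfl

lemma Fsq_mul_le (A B : Matrix (Fin N) (Fin N) ℝ) : Fsq (A * B) ≤ Fsq A * Fsq B := by
  have hB : Fsq B = ∑ j, ∑ k, B k j ^ 2 := Finset.sum_comm
  have h1 : Fsq (A * B) ≤ ∑ i, ∑ j, ((∑ k, A i k ^ 2) * (∑ k, B k j ^ 2)) := by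
    refine Finset.sum_le_sum fun i _ => Finset.sum_le_sum fun j _ => ?_
    simpa [Matrix.mul_apply] using
      Finset.sum_mul_sq_le_sq_mul_sq Finset.univ (fun k => A i k) (fun k => B k j)
  refine h1.trans_eq ?_
  rw [Fsq, hB, Finset.sum_mul_sum]

lemma trace_mul_sq_le (A B : Matrix (Fin N) (Fin N) ℝ) :
    (Matrix.trace (A * B)) ^ 2 ≤ Fsq A * Fsq B := by
  have h := Finset.sum_mul_sq_le_sq_mul_sq (Finset.univ : Finset (Fin N × Fin N))
    (fun p => A p.1 p.2) (fun p => B p.2 p.1)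
  have e1 : (∑ p : Fin N × Fin N, A p.1 p.2 * B p.2 p.1) = Matrix.trace (A * B) := by
    rw [Fintype.sum_prod_type]
    simp [Matrix.trace, Matrix.diag, Matrix.mul_apply]
  have e2 : (∑ p : Fin N × Fin N, (A p.1 p.2) ^ 2) = Fsq A := by
    rw [Fintype.sum_prod_type]; rfl
  have e3 : (∑ p : Fin N × Fin N, (B p.2 p.1) ^ 2) = Fsq B := by
    rw [Fintype.sum_prod_type, Fsq, Finset.sum_comm]
  rwa [e1, e2, e3] at h

lemma Fsq_pow_le (A : Matrix (Fin N) (Fin N) ℝ) : ∀ m : ℕ, Fsq (A ^ (m + 1)) ≤ Fsq A ^ (m + 1)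
  | 0 => by simp
  | m + 1 => by
    rw [pow_succ]
    calc Fsq (A ^ (m + 1) * A) ≤ Fsq (A ^ (m + 1)) * Fsq A := Fsq_mul_le _ _
      _ ≤ Fsq A ^ (m + 1) * Fsq A :=
          mul_le_mul_of_nonneg_right (Fsq_pow_le A m) (Fsq_nonneg A)
      _ = Fsq A ^ (m + 1 + 1) := (pow_succ _ _).symm

lemma abs_trace_le (A : Matrix (Fin N) (Fin N) ℝ) {n : ℕ} (hn : 1 ≤ n) :
    |Matrix.trace ((Aᵀ * A) ^ n)| ≤ Fsq A ^ n := by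
  have key : (Matrix.trace ((Aᵀ * A) ^ n)) ^ 2 ≤ (Fsq A ^ n) ^ 2 := by
    have hP : Fsq (Aᵀ * A) ≤ Fsq A ^ 2 :=
      (Fsq_mul_le _ _).trans_eq (by rw [Fsq_transpose, sq])
    rcases n with _ | _ | m
    · exact (Nat.not_succ_le_zero 0 hn).elim
    · have : Matrix.trace (Aᵀ * A) = Fsq A := by
        rw [Matrix.trace, Fsq]
        simp only [Matrix.diag, Matrix.mul_apply, Matrix.transpose_apply, sq]
        exact Finset.sum_comm
      rw [pow_one, pow_one, this]
    · calc (Matrix.trace ((Aᵀ * A) ^ (m + 2))) ^ 2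
          = (Matrix.trace ((Aᵀ * A) * (Aᵀ * A) ^ (m + 1))) ^ 2 := by rw [← pow_succ']
        _ ≤ Fsq (Aᵀ * A) * Fsq ((Aᵀ * A) ^ (m + 1)) := trace_mul_sq_le _ _
        _ ≤ (Fsq A ^ 2) * (Fsq A ^ 2) ^ (m + 1) := by
            refine mul_le_mul hP ((Fsq_pow_le _ m).trans ?_) (Fsq_nonneg _)
              (pow_nonneg (Fsq_nonneg _) 2)
            exact pow_le_pow_left₀ (Fsq_nonneg _) hP (m + 1)
        _ = (Fsq A ^ (m + 2)) ^ 2 := by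
            rw [← pow_succ', ← pow_mul, ← pow_mul]; ring_nf
  calc |Matrix.trace ((Aᵀ * A) ^ n)| = Real.sqrt ((Matrix.trace ((Aᵀ * A) ^ n)) ^ 2) :=
        (Real.sqrt_sq_eq_abs _).symm
    _ ≤ Real.sqrt ((Fsq A ^ n) ^ 2) := Real.sqrt_le_sqrt key
    _ = Fsq A ^ n := by rw [Real.sqrt_sq (pow_nonneg (Fsq_nonneg A) n)]

lemma amgm {n : ℕ} (hn : 1 ≤ n) (b : Fin n → ℝ) (hb : ∀ i, 0 ≤ b i) :
    ∏ i, b i ≤ (n : ℝ)⁻¹ * ∑ i, b i ^ n := by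
  have hn' : (n : ℝ) ≠ 0 := Nat.cast_ne_zero.2 (by omega)
  have h := Real.geom_mean_le_arith_mean_weighted Finset.univ (fun _ => (n : ℝ)⁻¹)
    (fun i => b i ^ n) (fun _ _ => by positivity)
    (by simp [Finset.card_univ]; field_simp)
    (fun i _ => pow_nonneg (hb i) n)
  calc ∏ i, b i = ∏ i, (b i ^ n) ^ ((n : ℝ)⁻¹) := by
        refine Finset.prod_congr rfl fun i _ => ?_
        rw [← Real.rpow_natCast (b i) n, ← Real.rpow_mul (hb i), mul_inv_cancel₀ hn',
          Real.rpow_one]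
    _ ≤ ∑ i, (n : ℝ)⁻¹ * b i ^ n := h
    _ = (n : ℝ)⁻¹ * ∑ i, b i ^ n := (Finset.mul_sum _ _ _).symm

end TraceAux

/-- **Lemma 4.4 of the paper.** If the lower-triangular entries `X_{i,j}^N` are
i.i.d. with a common distribution not depending on `N` and having finite moments
of all orders, then for every `n ≥ 1`,
`E[tr((X_N^* X_N)^n)] → 0`, where `tr = (1/N)·Tr`. -/
theorem expected_normalized_trace_tendsto_zero
    {Ω : Type*} [MeasureSpace Ω] [IsProbabilityMeasure (ℙ : Measure Ω)]
    (X : (N : ℕ) → Fin N → Fin N → Ω → ℝ)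
    (ξ : Ω → ℝ) (hξmeas : Measurable ξ)
    (hmeas : ∀ N (i j : Fin N), Measurable (X N i j))
    (hzero : ∀ N (i j : Fin N), i < j → ∀ ω, X N i j ω = 0)
    (hindep : ∀ N, iIndepFun
      (fun p : LTri N => X N p.1.1 p.1.2) ℙ)
    (hident : ∀ N (i j : Fin N), j ≤ i → IdentDistrib (X N i j) ξ ℙ ℙ)
    (hmom : ∀ p : ℕ, MemLp ξ p ℙ) :
    ∀ n : ℕ, 1 ≤ n →
      Tendsto
        (fun N : ℕ => ∫ ω, (1 / (N : ℝ)) *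
          Matrix.trace (((XMr N (X N) ω)ᵀ * XMr N (X N) ω) ^ n) ∂ℙ)
        atTop (nhds 0) := by
  intro n hn
  classical
  set C₀ : ℝ := ∫ ω, ξ ω ^ (2 * n) ∂ℙ with hC₀def
  have hC₀ : 0 ≤ C₀ := integral_nonneg fun ω => by
    rw [pow_mul]; exact pow_nonneg (sq_nonneg _) n
  have hξint : Integrable (fun ω => ξ ω ^ (2 * n)) ℙ := by
    have h := (hmom (2 * n)).integrable_norm_rpow
      (Nat.cast_ne_zero.2 (by omega : 2 * n ≠ 0)) (ENNReal.natCast_ne_top _)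
    refine h.congr (Filter.Eventually.of_forall fun ω => ?_)
    simp only [ENNReal.toReal_natCast, Real.rpow_natCast, Real.norm_eq_abs,
      (even_two_mul n).pow_abs]
  have entry_int : ∀ N (i j : Fin N), Integrable (fun ω => X N i j ω ^ (2 * n)) ℙ := by
    intro N i j
    rcases le_or_gt j i with h | h
    · exact (((hident N i j h).comp (measurable_id.pow_const (2 * n))).integrable_iff).2 hξint
    · have h0 : (fun ω => X N i j ω ^ (2 * n)) = fun _ => (0 : ℝ) := by
        funext ω; rw [hzero N i j h ω]; exact zero_pow (by omega)
      rw [h0]; exact integrable_const 0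
  have entry_bound : ∀ N (i j : Fin N), ∫ ω, X N i j ω ^ (2 * n) ∂ℙ ≤ C₀ := by
    intro N i j
    rcases le_or_gt j i with h | h
    · exact le_of_eq (((hident N i j h).comp (measurable_id.pow_const (2 * n))).integral_eq)
    · have h0 : (fun ω => X N i j ω ^ (2 * n)) = fun _ => (0 : ℝ) := by
        funext ω; rw [hzero N i j h ω]; exact zero_pow (by omega)
      rw [h0, integral_const]; simpa using hC₀
  apply squeeze_zero_norm' ?_ (tendsto_const_div_atTop_nhds_zero_nat C₀)
  filter_upwards [eventually_ge_atTop 1] with N hN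
  have hNne : (N : ℝ) ≠ 0 := Nat.cast_ne_zero.2 (by omega)
  set S : Ω → ℝ := fun ω => ∑ p : Fin N × Fin N, X N p.1 p.2 ω ^ 2 with hSdef
  -- expansion of S^n
  have hSpow : ∀ ω, S ω ^ n =
      ∑ p : Fin n → Fin N × Fin N, ∏ i, X N (p i).1 (p i).2 ω ^ 2 := by
    intro ω
    calc S ω ^ n = ∏ _i : Fin n, S ω := by
          rw [Finset.prod_const, Finset.card_univ, Fintype.card_fin]
      _ = ∑ p ∈ Fintype.piFinset (fun _ : Fin n => (Finset.univ : Finset (Fin N × Fin N))),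
            ∏ i, X N (p i).1 (p i).2 ω ^ 2 :=
          Finset.prod_univ_sum _ _
      _ = _ := by rw [Fintype.piFinset_univ]
  have prod_meas : ∀ p : Fin n → Fin N × Fin N,
      Measurable fun ω => ∏ i, X N (p i).1 (p i).2 ω ^ 2 := fun p =>
    Finset.measurable_prod _ fun i _ => (hmeas N _ _).pow_const 2
  have prod_le : ∀ (p : Fin n → Fin N × Fin N) (ω),
      ∏ i, X N (p i).1 (p i).2 ω ^ 2 ≤
        (n : ℝ)⁻¹ * ∑ i, X N (p i).1 (p i).2 ω ^ (2 * n) := by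
    intro p ω
    have h := TraceAux.amgm hn (fun i => X N (p i).1 (p i).2 ω ^ 2) (fun i => sq_nonneg _)
    simpa [← pow_mul, mul_comm n 2] using h
  have dom_int : ∀ p : Fin n → Fin N × Fin N,
      Integrable (fun ω => (n : ℝ)⁻¹ * ∑ i, X N (p i).1 (p i).2 ω ^ (2 * n)) ℙ := fun p =>
    (integrable_finset_sum _ fun i _ => entry_int N _ _).const_mul _
  have prod_int : ∀ p : Fin n → Fin N × Fin N,
      Integrable (fun ω => ∏ i, X N (p i).1 (p i).2 ω ^ 2) ℙ := fun p =>
    (dom_int p).mono' (prod_meas p).aestronglyMeasurable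
      (Filter.Eventually.of_forall fun ω => by
        rw [Real.norm_eq_abs, abs_of_nonneg (Finset.prod_nonneg fun i _ => sq_nonneg _)]
        exact prod_le p ω)
  have prod_integral_le : ∀ p : Fin n → Fin N × Fin N,
      ∫ ω, ∏ i, X N (p i).1 (p i).2 ω ^ 2 ∂ℙ ≤ C₀ := by
    intro p
    calc ∫ ω, ∏ i, X N (p i).1 (p i).2 ω ^ 2 ∂ℙ
        ≤ ∫ ω, (n : ℝ)⁻¹ * ∑ i, X N (p i).1 (p i).2 ω ^ (2 * n) ∂ℙ :=
          integral_mono (prod_int p) (dom_int p) (prod_le p)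
      _ = (n : ℝ)⁻¹ * ∑ i : Fin n, ∫ ω, X N (p i).1 (p i).2 ω ^ (2 * n) ∂ℙ := by
          rw [integral_const_mul, integral_finset_sum _ fun i _ => entry_int N _ _]
      _ ≤ (n : ℝ)⁻¹ * ∑ _i : Fin n, C₀ :=
          mul_le_mul_of_nonneg_left
            (Finset.sum_le_sum fun i _ => entry_bound N _ _) (by positivity)
      _ = C₀ := by
          rw [Finset.sum_const, Finset.card_univ, Fintype.card_fin, nsmul_eq_mul,
            ← mul_assoc, inv_mul_cancel₀ (Nat.cast_ne_zero.2 (by omega : n ≠ 0)), one_mul]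
  have Spow_int : Integrable (fun ω => S ω ^ n) ℙ := by
    have h : (fun ω => S ω ^ n) =
        fun ω => ∑ p : Fin n → Fin N × Fin N, ∏ i, X N (p i).1 (p i).2 ω ^ 2 :=
      funext hSpow
    rw [h]; exact integrable_finset_sum _ fun p _ => prod_int p
  have Spow_bound : ∫ ω, S ω ^ n ∂ℙ ≤ ((N : ℝ) ^ 2) ^ n * C₀ := by
    calc ∫ ω, S ω ^ n ∂ℙ
        = ∑ p : Fin n → Fin N × Fin N, ∫ ω, ∏ i, X N (p i).1 (p i).2 ω ^ 2 ∂ℙ := by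
          simp_rw [hSpow]
          exact integral_finset_sum _ fun p _ => prod_int p
      _ ≤ ∑ _p : Fin n → Fin N × Fin N, C₀ := Finset.sum_le_sum fun p _ => prod_integral_le p
      _ = (Fintype.card (Fin n → Fin N × Fin N) : ℝ) * C₀ := by
          rw [Finset.sum_const, Finset.card_univ, nsmul_eq_mul]
      _ = ((N : ℝ) ^ 2) ^ n * C₀ := by
          rw [Fintype.card_fun]
          simp only [Fintype.card_prod, Fintype.card_fin]
          push_cast; ring
  -- measurability of the trace integrand
  have pow_entry_meas : ∀ (M : Ω → Matrix (Fin N) (Fin N) ℝ),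
      (∀ i j, Measurable fun ω => M ω i j) →
      ∀ (m : ℕ) (i j : Fin N), Measurable fun ω => (M ω ^ m) i j := by
    intro M hM m
    induction m with
    | zero =>
      intro i j
      simp only [pow_zero]
      exact measurable_const
    | succ m ih =>
      intro i j
      simp only [pow_succ, Matrix.mul_apply]
      exact Finset.measurable_sum _ fun k _ => (ih i k).mul (hM k j)
  have base_meas : ∀ i j : Fin N,
      Measurable fun ω => ((XMr N (X N) ω)ᵀ * XMr N (X N) ω) i j := by
    intro i j
    simp only [Matrix.mul_apply, Matrix.transpose_apply, XMr, Matrix.of_apply]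
    exact Finset.measurable_sum _ fun k _ =>
      (((hmeas N k i).const_mul _).mul ((hmeas N k j).const_mul _))
  have f_meas : AEStronglyMeasurable
      (fun ω => (1 / (N : ℝ)) *
        Matrix.trace (((XMr N (X N) ω)ᵀ * XMr N (X N) ω) ^ n)) ℙ := by
    refine (Measurable.const_mul ?_ _).aestronglyMeasurable
    simp only [Matrix.trace, Matrix.diag]
    exact Finset.measurable_sum _ fun i _ => pow_entry_meas _ base_meas n i i
  -- pointwise bound
  have hFsq : ∀ ω, TraceAux.Fsq (XMr N (X N) ω) = ((N : ℝ)⁻¹) ^ 2 * S ω := by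
    intro ω
    simp only [TraceAux.Fsq, XMr, Matrix.of_apply, hSdef, mul_pow,
      Fintype.sum_prod_type, ← Finset.mul_sum]
  have hfg : ∀ ω, ‖(1 / (N : ℝ)) *
      Matrix.trace (((XMr N (X N) ω)ᵀ * XMr N (X N) ω) ^ n)‖ ≤
      (1 / (N : ℝ)) * ((((N : ℝ)⁻¹) ^ 2) ^ n * S ω ^ n) := by
    intro ω
    rw [Real.norm_eq_abs, abs_mul, abs_of_nonneg (by positivity : (0:ℝ) ≤ 1 / (N : ℝ))]
    refine mul_le_mul_of_nonneg_left ?_ (by positivity)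
    calc |Matrix.trace (((XMr N (X N) ω)ᵀ * XMr N (X N) ω) ^ n)|
        ≤ TraceAux.Fsq (XMr N (X N) ω) ^ n := TraceAux.abs_trace_le _ hn
      _ = (((N : ℝ)⁻¹) ^ 2) ^ n * S ω ^ n := by rw [hFsq ω, mul_pow]
  have g_int : Integrable
      (fun ω => (1 / (N : ℝ)) * ((((N : ℝ)⁻¹) ^ 2) ^ n * S ω ^ n)) ℙ :=
    (Spow_int.const_mul _).const_mul _
  calc ‖∫ ω, (1 / (N : ℝ)) *
        Matrix.trace (((XMr N (X N) ω)ᵀ * XMr N (X N) ω) ^ n) ∂ℙ‖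
      ≤ ∫ ω, (1 / (N : ℝ)) * ((((N : ℝ)⁻¹) ^ 2) ^ n * S ω ^ n) ∂ℙ :=
        norm_integral_le_of_norm_le g_int (Filter.Eventually.of_forall hfg)
    _ = (1 / (N : ℝ)) * ((((N : ℝ)⁻¹) ^ 2) ^ n * ∫ ω, S ω ^ n ∂ℙ) := by
        rw [integral_const_mul, integral_const_mul]
    _ ≤ (1 / (N : ℝ)) * ((((N : ℝ)⁻¹) ^ 2) ^ n * (((N : ℝ) ^ 2) ^ n * C₀)) := by
        gcongr
    _ = C₀ / N := by
        rw [show (((N : ℝ)⁻¹) ^ 2) ^ n * (((N : ℝ) ^ 2) ^ n * C₀) = C₀ by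
          rw [← mul_assoc, ← mul_pow, ← mul_pow, inv_mul_cancel₀ hNne, one_pow, one_pow,
            one_mul]]
        rw [one_div, inv_mul_eq_div]


end
end
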